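/- arXiv:2304.13990 — 7 statements merged into one kernel-verified Lean document; each statement's English description precedes it below -/
import Mathlib

section
/- For the standard λ-symmetrized vectors f^λ_{ij} = C_λ(f_{ij}), the inner product ⟨f^λ_{ij}, f^λ_{rs}⟩ equals 0 if i ≠ r or if j and s are in different G-orbits, and equals (λ(1)/|G|) Σ_{g∈G_j} λ(gτ^{-1}) when i = r and s = τ(j). In particular ‖f^λ_{ij}‖² = λ(1)[λ, 1_{G_j}]/[G:G_j]. -/
open scoped Classical InnerProductSpace ComplexConjugate

noncomputable section

/-- The Cartesian product `×^m V` with the inner product `⟨z,w⟩ = Σ ⟨z_i, w_i⟩`. -/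
abbrev CartPow (V : Type*) [NormedAddCommGroup V] [InnerProductSpace ℂ V] (m : ℕ) :=
  PiLp 2 (fun _ : Fin m => V)

/-- The Cartesian permutation operator `Q(τ)(u₁,…,u_m) = (u_{τ⁻¹(1)},…,u_{τ⁻¹(m)})`. -/
def CartQ (V : Type*) [NormedAddCommGroup V] [InnerProductSpace ℂ V] (m : ℕ)
    (τ : Equiv.Perm (Fin m)) : CartPow V m →ₗ[ℂ] CartPow V m where
  toFun u := WithLp.toLp 2 (fun i => u (τ⁻¹ i))
  map_add' _ _ := rfl
  map_smul' _ _ := rfl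

/-- The Cartesian symmetrizer `C_χ = (χ(1)/|G|) Σ_{τ∈G} χ(τ) Q(τ)`. -/
def cartSym (V : Type*) [NormedAddCommGroup V] [InnerProductSpace ℂ V] (m : ℕ)
    (G : Subgroup (Equiv.Perm (Fin m))) (χ : ↥G → ℂ) :
    CartPow V m →ₗ[ℂ] CartPow V m :=
  (χ 1 / (Nat.card G : ℂ)) • ∑ τ : G, χ τ • CartQ V m (τ : Equiv.Perm (Fin m))

/-- `χ : H → ℂ` is the character of some irreducible (finite-dimensional, complex)
representation of `H`. -/
def IsIrredChar {H : Type} [Group H] (χ : H → ℂ) : Prop :=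
  ∃ W : FDRep ℂ H, CategoryTheory.Simple W ∧ χ = W.character

/-- The standard vectors `f_{ij} = (δ_{1j} f_i, …, δ_{mj} f_i)` in `×^m V`. -/
def stdVec {V : Type*} [NormedAddCommGroup V] [InnerProductSpace ℂ V] {n : ℕ}
    (f : Fin n → V) (m : ℕ) (i : Fin n) (j : Fin m) : CartPow V m :=
  WithLp.toLp 2 (fun l => if l = j then f i else 0)

/-- `[χ, 1_{G_j}] = (1/|G_j|) Σ_{g ∈ G_j} χ(g)`. -/
def charInnerTriv {m : ℕ} (G : Subgroup (Equiv.Perm (Fin m))) (χ : ↥G → ℂ)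
    (j : Fin m) : ℂ :=
  (Nat.card (MulAction.stabilizer G j) : ℂ)⁻¹ * ∑ g : MulAction.stabilizer G j, χ (g : ↥G)

/-- `V^χ(G)` has an orthogonal basis consisting of standard χ-symmetrized vectors. -/
def HasOBasis (V : Type*) [NormedAddCommGroup V] [InnerProductSpace ℂ V] {n m : ℕ}
    (f : Fin n → V) (G : Subgroup (Equiv.Perm (Fin m))) (χ : ↥G → ℂ) : Prop :=
  ∃ (k : ℕ) (b : Module.Basis (Fin k) ℂ (LinearMap.range (cartSym V m G χ))),
    (∀ p q : Fin k, p ≠ q → ⟪(b p : CartPow V m), (b q : CartPow V m)⟫_ℂ = 0) ∧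
    ∀ p, ∃ (r : Fin n) (j : Fin m), (b p : CartPow V m) = cartSym V m G χ (stdVec f m r j)

/-- The Ramanujan sum `c_n(q)`. -/
def ramanujanSum (n q : ℕ) : ℂ :=
  ∑ s ∈ (Finset.range n).filter (fun s => Nat.gcd s n = 1),
    Complex.exp (2 * Real.pi * Complex.I * q * s / n)

end


-- ==================== Auxiliary lemmas ====================

section Aux

open CategoryTheory

/-- Trace of a power of a restriction to a generalized eigenspace. -/
lemma trace_restrict_maxGen {W : Type*} [AddCommGroup W] [Module ℂ W] [FiniteDimensional ℂ W]
    (A : Module.End ℂ W) (μ : ℂ) (p : ℕ)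
    (h : Set.MapsTo (A ^ p) (A.maxGenEigenspace μ) (A.maxGenEigenspace μ)) :
    LinearMap.trace ℂ _ ((A ^ p).restrict h) =
      μ ^ p * (Module.finrank ℂ (A.maxGenEigenspace μ) : ℂ) := by
  have hmaps : Set.MapsTo A (A.maxGenEigenspace μ) (A.maxGenEigenspace μ) :=
    Module.End.mapsTo_maxGenEigenspace_of_comm (Commute.refl A) μ
  have hres : (A ^ p).restrict h = (A.restrict hmaps) ^ p := by
    exact (Module.End.pow_restrict p hmaps h).symm
  set B := A.restrict hmaps with hB
  set N := B - μ • 1 with hN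
  have hnil : IsNilpotent N := by
    have h2 := Module.End.isNilpotent_restrict_maxGenEigenspace_sub_algebraMap A μ
    have heq : (A - algebraMap ℂ (Module.End ℂ W) μ).restrict
        (Module.End.mapsTo_maxGenEigenspace_of_comm
          (Algebra.mul_sub_algebraMap_commutes A μ) μ) = N := by
      ext x
      simp [hN, hB, LinearMap.restrict_apply, Module.algebraMap_end_eq_smul_id]
      rfl
    rwa [heq] at h2
  have hcomm : Commute N (μ • (1 : Module.End ℂ (A.maxGenEigenspace μ))) :=
    ((Commute.one_right N).smul_right μ)
  have hBpow : B ^ p = ∑ i ∈ Finset.range (p + 1),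
      N ^ i * (μ • (1 : Module.End ℂ (A.maxGenEigenspace μ))) ^ (p - i)
        * (p.choose i : Module.End ℂ (A.maxGenEigenspace μ)) := by
    have hBN : B = N + μ • 1 := by rw [hN]; abel
    rw [hBN, Commute.add_pow hcomm]
  have htrN : ∀ i, 0 < i → LinearMap.trace ℂ _ (N ^ i) = 0 := by
    intro i hi
    obtain ⟨r, hr⟩ := hnil
    have hni : IsNilpotent (N ^ i) := ⟨r, by
      rw [← pow_mul, mul_comm, pow_mul, hr, zero_pow hi.ne']⟩
    exact (LinearMap.isNilpotent_trace_of_isNilpotent hni).eq_zero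
  rw [hres, hBpow, map_sum, Finset.sum_eq_single 0]
  · simp only [pow_zero, one_mul, Nat.choose_zero_right, Nat.cast_one, mul_one, Nat.sub_zero,
      smul_pow, one_pow, map_smul, LinearMap.trace_one, smul_eq_mul]
  · intro i hi hi0
    have hterm : N ^ i * (μ • (1:Module.End ℂ (A.maxGenEigenspace μ))) ^ (p - i)
        * (p.choose i : Module.End ℂ (A.maxGenEigenspace μ))
        = ((μ ^ (p-i)) * (p.choose i : ℂ)) • N ^ i := by
      have hc : (p.choose i : Module.End ℂ (A.maxGenEigenspace μ)) = (p.choose i : ℂ) • 1 := by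
        rw [Nat.cast_smul_eq_nsmul, nsmul_eq_mul, mul_one]
      rw [smul_pow, one_pow, hc]
      simp [smul_smul, mul_smul_comm, smul_mul_assoc, mul_comm]
    rw [hterm, map_smul, htrN i (Nat.pos_of_ne_zero hi0), smul_zero]
  · simp

lemma trace_pow_pred_conj {W : Type*} [AddCommGroup W] [Module ℂ W] [FiniteDimensional ℂ W]
    (A : Module.End ℂ W) (k : ℕ) (hk : 0 < k) (hA : A ^ k = 1) :
    LinearMap.trace ℂ W (A ^ (k - 1)) = conj (LinearMap.trace ℂ W A) := by
  have hInd := A.independent_maxGenEigenspace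
  have hTop := Module.End.iSup_maxGenEigenspace_eq_top A
  have hInt : DirectSum.IsInternal A.maxGenEigenspace :=
    DirectSum.isInternal_submodule_of_iSupIndep_of_iSup_eq_top hInd hTop
  have hFin : {μ | A.maxGenEigenspace μ ≠ ⊥}.Finite :=
    WellFoundedGT.finite_ne_bot_of_iSupIndep hInd
  have hmapsP : ∀ (p : ℕ) (μ : ℂ),
      Set.MapsTo (A ^ p) (A.maxGenEigenspace μ) (A.maxGenEigenspace μ) :=
    fun p μ => Module.End.mapsTo_maxGenEigenspace_of_comm ((Commute.refl A).pow_right p) μ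
  have hμk : ∀ μ ∈ hFin.toFinset, μ ^ k = 1 := by
    intro μ hμ
    have hne : A.maxGenEigenspace μ ≠ ⊥ := by simpa using hμ
    have hd : 0 < Module.finrank ℂ (A.maxGenEigenspace μ) := by
      rw [Module.finrank_pos_iff]
      exact Submodule.nontrivial_iff_ne_bot.mpr hne
    have h1 := trace_restrict_maxGen A μ k (hmapsP k μ)
    have h2 : (A ^ k).restrict (hmapsP k μ) = 1 := by
      ext x
      simp [LinearMap.restrict_apply, hA]
    rw [h2, LinearMap.trace_one] at h1
    have hd0 : ((Module.finrank ℂ (A.maxGenEigenspace μ)) : ℂ) ≠ 0 := Nat.cast_ne_zero.mpr hd.ne'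
    have h3 : μ ^ k * (Module.finrank ℂ (A.maxGenEigenspace μ) : ℂ)
        = 1 * (Module.finrank ℂ (A.maxGenEigenspace μ) : ℂ) := by rw [one_mul, ← h1]
    exact mul_right_cancel₀ hd0 h3
  have key : ∀ p : ℕ, LinearMap.trace ℂ W (A ^ p) =
      ∑ μ ∈ hFin.toFinset, μ ^ p * (Module.finrank ℂ (A.maxGenEigenspace μ) : ℂ) := by
    intro p
    rw [LinearMap.trace_eq_sum_trace_restrict' hInt hFin (hmapsP p)]
    exact Finset.sum_congr rfl fun μ _ => trace_restrict_maxGen A μ p (hmapsP p μ)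
  have hA1 : LinearMap.trace ℂ W A =
      ∑ μ ∈ hFin.toFinset, μ * (Module.finrank ℂ (A.maxGenEigenspace μ) : ℂ) := by
    simpa using key 1
  rw [key (k-1), hA1, map_sum]
  refine Finset.sum_congr rfl fun μ hμ => ?_
  have h1 : μ ^ k = 1 := hμk μ hμ
  have hμ0 : μ ≠ 0 := by
    intro h0; rw [h0, zero_pow hk.ne'] at h1; exact zero_ne_one h1
  have habs : ‖μ‖ = 1 := by
    have habs2 : ‖μ‖ ^ k = 1 := by
      rw [← norm_pow, h1, norm_one]
    rcases (pow_eq_one_iff_cases).mp habs2 with h | h | h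
    · omega
    · exact h
    · nlinarith [norm_nonneg μ, h.1]
  have hconj : conj μ = μ ^ (k - 1) := by
    have hinv : μ * conj μ = 1 := by
      rw [Complex.mul_conj, Complex.normSq_eq_norm_sq, habs]; norm_num
    have hinv2 : μ * μ ^ (k - 1) = 1 := by
      rw [← pow_succ', Nat.sub_add_cancel hk, h1]
    exact mul_left_cancel₀ hμ0 (hinv.trans hinv2.symm)
  rw [map_mul, hconj, map_natCast]

lemma conj_char {H : Type} [Group H] [Finite H] (W : FDRep ℂ H) (g : H) :
    conj (W.character g) = W.character g⁻¹ := by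
  set k := orderOf g with hk
  have hk0 : 0 < k := orderOf_pos g
  have hpow : (W.ρ g) ^ k = 1 := by
    rw [← map_pow, pow_orderOf_eq_one, map_one]
  have hginv : g⁻¹ = g ^ (k - 1) := by
    symm
    apply eq_inv_of_mul_eq_one_left
    rw [← pow_succ, Nat.sub_add_cancel hk0, hk, pow_orderOf_eq_one]
  rw [FDRep.character, FDRep.character, hginv, map_pow]
  exact (trace_pow_pred_conj (W.ρ g) k hk0 hpow).symm

lemma char_conv {H : Type} [Group H] [Fintype H] (W : FDRep ℂ H) [Simple W] :
    W.character 1 ≠ 0 ∧ ∀ t : H, ∑ σ : H, W.character σ⁻¹ * W.character (σ * t)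
       = (Fintype.card H : ℂ) / W.character 1 * W.character t := by
  classical
  set χ := W.character with hχ
  set L : Module.End ℂ W := ∑ σ : H, χ σ⁻¹ • (W.ρ σ : Module.End ℂ W) with hL
  have hcomm : ∀ h : H, (W.ρ h : Module.End ℂ W) * L = L * W.ρ h := by
    intro h
    rw [hL, Finset.mul_sum, Finset.sum_mul]
    simp_rw [mul_smul_comm, smul_mul_assoc, ← map_mul]
    refine Fintype.sum_equiv ((Equiv.mulLeft h).trans (Equiv.mulRight h⁻¹)) _ _ fun i => ?_
    simp only [Equiv.trans_apply, Equiv.coe_mulLeft, Equiv.coe_mulRight]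
    have h1 : h * i * h⁻¹ * h = h * i := by group
    have h2 : (h * i * h⁻¹)⁻¹ = h * i⁻¹ * h⁻¹ := by group
    rw [h1, h2, hχ, FDRep.char_conj]
  set T : W ⟶ W := ⟨InducedCategory.homMk (ModuleCat.ofHom L), fun h => by
    ext x
    exact congrFun (congrArg _ (hcomm h).symm) x⟩ with hT
  obtain ⟨c, hc⟩ := CategoryTheory.endomorphism_simple_eq_smul_id ℂ T
  have hLc : L = c • (1 : Module.End ℂ W) := by
    have := congrArg (fun φ : W ⟶ W => φ.hom.hom.hom) hc
    refine this.symm.trans ?_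
    ext x
    rfl
  have htr : ∀ t : H, ∑ σ : H, χ σ⁻¹ * χ (σ * t) = c * χ t := by
    intro t
    have h0 : LinearMap.trace ℂ W (L * W.ρ t) = c * χ t := by
      rw [hLc]
      simp [LinearMap.trace, hχ, FDRep.character]
    rw [← h0, hL, Finset.sum_mul, map_sum]
    refine Finset.sum_congr rfl fun σ _ => ?_
    rw [smul_mul_assoc, map_smul, ← map_mul]
    rfl
  have hcard : ((Fintype.card H : ℂ)) ≠ 0 := by exact_mod_cast Fintype.card_ne_zero
  have horth : ∑ σ : H, χ σ⁻¹ * χ σ = (Fintype.card H : ℂ) := by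
    letI : Fintype ↑(GrpCat.of H) := ‹Fintype H›
    letI : Invertible ((Fintype.card ↑(GrpCat.of H) : ℂ)) := invertibleOfNonzero hcard
    have h := FDRep.char_orthonormal (G := GrpCat.of H) W W
    rw [if_pos ⟨Iso.refl W⟩] at h
    rw [inv_mul_eq_iff_eq_mul₀ (by simpa using hcard)] at h
    have h2 : ∑ g : H, χ g * χ g⁻¹ = (Fintype.card H : ℂ) := by
      rw [mul_one, Nat.card_eq_fintype_card] at h
      exact h
    rw [← h2, ← Equiv.sum_comp (Equiv.inv H) (fun g => χ g * χ g⁻¹)]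
    simp [mul_comm]
  have hc1 : c * χ 1 = (Fintype.card H : ℂ) := by
    have h1 := htr 1
    simp only [mul_one] at h1
    rw [← h1, horth]
  have hχ1 : χ 1 ≠ 0 := by
    intro h0
    rw [h0, mul_zero] at hc1
    exact hcard hc1.symm
  refine ⟨hχ1, fun t => ?_⟩
  rw [htr t]
  congr 1
  rw [eq_div_iff hχ1]
  exact hc1

variable {V : Type*} [NormedAddCommGroup V] [InnerProductSpace ℂ V] {n m : ℕ}

lemma cartQ_stdVec (f : Fin n → V) (σ : Equiv.Perm (Fin m)) (i : Fin n) (j : Fin m) :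
    CartQ V m σ (stdVec f m i j) = stdVec f m i (σ j) := by
  ext l
  simp only [CartQ, LinearMap.coe_mk, AddHom.coe_mk, stdVec]
  by_cases h : l = σ j
  · subst h; simp
  · have h2 : σ⁻¹ l ≠ j := fun hh => h (by rw [← hh]; simp)
    simp [h, h2]
    exact fun hh => absurd hh h2

lemma inner_stdVec (f : OrthonormalBasis (Fin n) ℂ V) (i r : Fin n) (a b : Fin m) :
    ⟪stdVec ⇑f m i a, stdVec ⇑f m r b⟫_ℂ = if i = r ∧ a = b then 1 else 0 := by
  rw [PiLp.inner_apply]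
  have horth := orthonormal_iff_ite.mp f.orthonormal
  by_cases hab : a = b
  · subst hab
    rw [Finset.sum_eq_single a]
    · simp [stdVec, horth i r, and_true]
    · intro l _ hl
      simp [stdVec, hl]
    · simp
  · rw [Finset.sum_eq_zero]
    · simp [hab]
    · intro l _
      simp only [stdVec]
      rcases eq_or_ne l a with rfl | hla
      · simp [hab]
      · simp [hla]

lemma inner_cartSym_expand (f : OrthonormalBasis (Fin n) ℂ V)
    (G : Subgroup (Equiv.Perm (Fin m))) (χ : ↥G → ℂ) (i r : Fin n) (j s : Fin m) :
    ⟪cartSym V m G χ (stdVec ⇑f m i j), cartSym V m G χ (stdVec ⇑f m r s)⟫_ℂ =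
      conj (χ 1 / (Nat.card G : ℂ)) * (χ 1 / (Nat.card G : ℂ)) *
        ∑ σ : G, ∑ τ : G, conj (χ σ) * χ τ *
          (if i = r ∧ (σ : Equiv.Perm (Fin m)) j = (τ : Equiv.Perm (Fin m)) s then 1 else 0) := by
  simp only [cartSym, LinearMap.smul_apply, LinearMap.coe_sum, Finset.sum_apply]
  rw [inner_smul_left, inner_smul_right, ← mul_assoc]
  congr 1
  rw [sum_inner]
  refine Finset.sum_congr rfl fun σ _ => ?_
  rw [inner_sum]
  refine Finset.sum_congr rfl fun τ _ => ?_
  rw [inner_smul_left, inner_smul_right, cartQ_stdVec, cartQ_stdVec, inner_stdVec f]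
  ring

end Aux

set_option maxHeartbeats 2000000 in
/-- inner products of standard `χ`-symmetrized vectors, and the norm
formula `‖f^χ_{ij}‖² = χ(1)·[χ, 1_{G_j}]/[G : G_j]`. -/
theorem inner_cartSym_stdVec
    (V : Type*) [NormedAddCommGroup V] [InnerProductSpace ℂ V] [FiniteDimensional ℂ V]
    {n m : ℕ} (f : OrthonormalBasis (Fin n) ℂ V)
    (G : Subgroup (Equiv.Perm (Fin m))) (χ : ↥G → ℂ) (hχ : IsIrredChar χ) :
    (∀ (i r : Fin n) (j s : Fin m), (i ≠ r ∨ s ∉ MulAction.orbit G j) →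
      ⟪cartSym V m G χ (stdVec ⇑f m i j), cartSym V m G χ (stdVec ⇑f m r s)⟫_ℂ = 0) ∧
    (∀ (i : Fin n) (j : Fin m) (τ : ↥G),
      ⟪cartSym V m G χ (stdVec ⇑f m i j), cartSym V m G χ (stdVec ⇑f m i (τ • j))⟫_ℂ =
        (χ 1 / (Nat.card G : ℂ)) * ∑ g : MulAction.stabilizer G j, χ ((g : ↥G) * τ⁻¹)) ∧
    (∀ (i : Fin n) (j : Fin m),
      (‖cartSym V m G χ (stdVec ⇑f m i j)‖ : ℂ) ^ 2 =
        χ 1 * charInnerTriv G χ j / ((MulAction.stabilizer G j).index : ℂ)) := by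
  classical
  obtain ⟨W, hsimple, hχW⟩ := hχ
  haveI := hsimple
  subst hχW
  set χ := W.character with hχdef
  have hconj : ∀ g : ↥G, conj (χ g) = χ g⁻¹ := fun g => conj_char W g
  obtain ⟨hχ1, hconv⟩ := char_conv W
  have hkey : ∀ t : ↥G, ∑ σ : ↥G, conj (χ σ) * χ (σ * t)
      = (Fintype.card ↥G : ℂ) / χ 1 * χ t := by
    intro t
    simp_rw [hconj]
    exact hconv t
  have hcard : (Nat.card ↥G : ℂ) = (Fintype.card ↥G : ℂ) := by
    rw [Nat.card_eq_fintype_card]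
  have hFcard0 : ((Fintype.card ↥G : ℂ)) ≠ 0 := by exact_mod_cast Fintype.card_ne_zero
  have hcard0 : (Nat.card ↥G : ℂ) ≠ 0 := by rw [hcard]; exact hFcard0
  have hχ1conj : conj (χ 1) = χ 1 := by simpa using hconj 1
  have hcconj : conj (χ 1 / (Nat.card ↥G : ℂ)) = χ 1 / (Nat.card ↥G : ℂ) := by
    rw [map_div₀, hχ1conj, map_natCast]
  have hsmul : ∀ (g : ↥G) (a : Fin m), g • a = (g : Equiv.Perm (Fin m)) a := fun g a => rfl
  -- Part 2
  have part2 : ∀ (i : Fin n) (j : Fin m) (τ₀ : ↥G),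
      ⟪cartSym V m G χ (stdVec ⇑f m i j), cartSym V m G χ (stdVec ⇑f m i (τ₀ • j))⟫_ℂ =
        (χ 1 / (Nat.card G : ℂ)) * ∑ g : MulAction.stabilizer G j, χ ((g : ↥G) * τ₀⁻¹) := by
    intro i j τ₀
    rw [inner_cartSym_expand f G χ i i j (τ₀ • j)]
    have hsub : ∀ F : ↥G → ℂ, (∑ g : MulAction.stabilizer G j, F ↑g)
        = ∑ g ∈ Finset.univ.filter (fun g : ↥G => g ∈ MulAction.stabilizer G j), F g := by
      intro F
      exact (Finset.sum_subtype _ (by simp) F).symm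
    have hτsum : ∀ σ : ↥G, (∑ τ : ↥G, conj (χ σ) * χ τ *
          (if i = i ∧ (σ : Equiv.Perm (Fin m)) j = (τ : Equiv.Perm (Fin m)) (τ₀ • j)
            then 1 else 0))
        = conj (χ σ) * ∑ g : MulAction.stabilizer G j, χ (σ * g * τ₀⁻¹) := by
      intro σ
      rw [hsub fun g => χ (σ * g * τ₀⁻¹), Finset.mul_sum]
      simp only [eq_self_iff_true, true_and, mul_ite, mul_one, mul_zero]
      rw [← Finset.sum_filter]
      refine Finset.sum_nbij' (fun τ => σ⁻¹ * τ * τ₀) (fun g => σ * g * τ₀⁻¹) ?_ ?_ ?_ ?_ ?_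
      · intro τ hτ
        simp only [Finset.mem_filter, Finset.mem_univ, true_and] at hτ ⊢
        rw [MulAction.mem_stabilizer_iff, hsmul]
        rw [hsmul τ₀ j] at hτ
        simp only [Subgroup.coe_mul, InvMemClass.coe_inv, Equiv.Perm.mul_apply]
        rw [← hτ]
        simp
      · intro g hg
        simp only [Finset.mem_filter, Finset.mem_univ, true_and] at hg ⊢
        have hgj : (g : Equiv.Perm (Fin m)) j = j := by
          have := (MulAction.mem_stabilizer_iff).mp hg
          rw [hsmul] at this
          exact this
        rw [hsmul τ₀ j]
        simp only [Subgroup.coe_mul, InvMemClass.coe_inv, Equiv.Perm.mul_apply]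
        rw [Equiv.Perm.inv_eq_iff_eq.mpr rfl, hgj]
      · intro τ _; group
      · intro g _; group
      · intro τ _
        congr 2
        group
    have h1 : (∑ σ : ↥G, ∑ τ : ↥G, conj (χ σ) * χ τ *
          (if i = i ∧ (σ : Equiv.Perm (Fin m)) j = (τ : Equiv.Perm (Fin m)) (τ₀ • j)
            then 1 else 0))
        = ∑ g : MulAction.stabilizer G j,
            ((Fintype.card ↥G : ℂ) / χ 1) * χ ((g : ↥G) * τ₀⁻¹) := by
      rw [Finset.sum_congr rfl fun σ _ => hτsum σ]
      simp_rw [Finset.mul_sum]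
      rw [Finset.sum_comm]
      refine Finset.sum_congr rfl fun g _ => ?_
      simp_rw [mul_assoc]
      exact hkey ((g : ↥G) * τ₀⁻¹)
    rw [h1, hcconj, ← Finset.mul_sum, hcard]
    rw [← mul_assoc]
    congr 1
    field_simp
  refine ⟨?_, part2, ?_⟩
  -- Part 1
  · intro i r j s hor
    rw [inner_cartSym_expand f G χ i r j s]
    rw [Finset.sum_eq_zero, mul_zero]
    intro σ _
    rw [Finset.sum_eq_zero]
    intro τ _
    rcases hor with hir | hs
    · rw [if_neg (fun h => hir h.1), mul_zero]
    · rw [if_neg, mul_zero]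
      rintro ⟨-, hc⟩
      refine hs ⟨τ⁻¹ * σ, ?_⟩
      show ((τ⁻¹ * σ : ↥G)) • j = s
      rw [hsmul]
      simp only [Subgroup.coe_mul, InvMemClass.coe_inv, Equiv.Perm.mul_apply]
      rw [hc, Equiv.Perm.inv_eq_iff_eq.mpr rfl]
  -- Part 3
  · intro i j
    have h2 := part2 i j 1
    rw [one_smul] at h2
    simp only [inv_one, mul_one] at h2
    have hnorm : ((‖cartSym V m G χ (stdVec ⇑f m i j)‖ : ℂ)) ^ 2
        = ⟪cartSym V m G χ (stdVec ⇑f m i j), cartSym V m G χ (stdVec ⇑f m i j)⟫_ℂ := by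
      rw [inner_self_eq_norm_sq_to_K]; rfl
    rw [hnorm, h2, charInnerTriv]
    have hGeq : (Nat.card ↥G : ℂ)
        = ((MulAction.stabilizer G j).index : ℂ) * (Nat.card (MulAction.stabilizer G j) : ℂ) := by
      rw [← Nat.cast_mul, Subgroup.index_mul_card]
    have hstab0 : (Nat.card (MulAction.stabilizer G j) : ℂ) ≠ 0 := by
      have : 0 < Nat.card (MulAction.stabilizer G j) := Nat.card_pos
      exact_mod_cast this.ne'
    have hidx0 : ((MulAction.stabilizer G j).index : ℂ) ≠ 0 := by
      have : (MulAction.stabilizer G j).index ≠ 0 := Subgroup.index_ne_zero_of_finite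
      exact_mod_cast this
    rw [hGeq]
    have halg : ∀ a b c S : ℂ, a / (b * c) * S = a * (c⁻¹ * S) / b := by
      intro a b c S
      rw [div_eq_mul_inv, div_eq_mul_inv, mul_inv]
      ring
    exact halg _ _ _ _
end

section
/- If λ is a linear character of G and j satisfies [λ, 1_{G_j}] ≠ 0, then for all σ ∈ G, f^λ_{iσ(j)} = λ(σ^{-1}) f^λ_{ij}; hence the cyclic subspace V^λ_{ij} = span{f^λ_{iσ(j)} : σ ∈ G} is one-dimensional. -/
open scoped Classical InnerProductSpace ComplexConjugate

lemma trace_mul_of_finrank_one {M : Type*} [AddCommGroup M] [Module ℂ M]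
    (h : Module.finrank ℂ M = 1) (f g : M →ₗ[ℂ] M) :
    LinearMap.trace ℂ M (f * g) = LinearMap.trace ℂ M f * LinearMap.trace ℂ M g := by
  have : Module.Finite ℂ M := Module.finite_of_finrank_pos (by omega)
  let b := Module.basisUnique (Fin 1) h
  rw [LinearMap.trace_eq_matrix_trace ℂ b, LinearMap.trace_eq_matrix_trace ℂ b,
    LinearMap.trace_eq_matrix_trace ℂ b, LinearMap.toMatrix_mul]
  simp [Matrix.trace, Matrix.mul_apply]

set_option maxHeartbeats 1000000

/-- for a linear character `χ` and `j` with `[χ, 1_{G_j}] ≠ 0`,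
`f^χ_{iσ(j)} = χ(σ⁻¹)·f^χ_{ij}` for all `σ ∈ G`, so the cyclic subspace
`V^χ_{ij}` is one-dimensional. -/
theorem cyclic_subspace_of_linear_character
    (V : Type*) [NormedAddCommGroup V] [InnerProductSpace ℂ V] [FiniteDimensional ℂ V]
    {n m : ℕ} (f : OrthonormalBasis (Fin n) ℂ V)
    (G : Subgroup (Equiv.Perm (Fin m))) (χ : ↥G → ℂ)
    (hχ : IsIrredChar χ) (hlin : χ 1 = 1)
    (i : Fin n) (j : Fin m) (hj : charInnerTriv G χ j ≠ 0) :
    (∀ σ : ↥G, cartSym V m G χ (stdVec ⇑f m i (σ • j)) =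
        χ σ⁻¹ • cartSym V m G χ (stdVec ⇑f m i j)) ∧
    Module.finrank ℂ (Submodule.span ℂ
      (Set.range fun σ : ↥G => cartSym V m G χ (stdVec ⇑f m i (σ • j)))) = 1 := by
  classical
  have hmul : ∀ a b : ↥G, χ (a * b) = χ a * χ b := by
    obtain ⟨W, hW, rfl⟩ := hχ
    rw [FDRep.char_one] at hlin
    have h1 : Module.finrank ℂ W = 1 := by exact_mod_cast hlin
    intro a b
    simp only [FDRep.character, map_mul]
    exact trace_mul_of_finrank_one h1 _ _
  have hNG : (Nat.card ↥G : ℂ) ≠ 0 := Nat.cast_ne_zero.mpr Nat.card_pos.ne'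
  have hQ : ∀ (τ : Equiv.Perm (Fin m)) (l : Fin m),
      CartQ V m τ (stdVec ⇑f m i l) = stdVec ⇑f m i (τ l) := by
    intro τ l
    ext x
    show stdVec ⇑f m i l (τ⁻¹ x) = stdVec ⇑f m i (τ l) x
    simp only [stdVec, PiLp.toLp_apply]
    by_cases h : x = τ l
    · rw [if_pos h, if_pos (by rw [h]; simp)]
    · rw [if_neg h, if_neg (fun hc => h (by rw [← hc]; simp))]
  have key : ∀ σ : ↥G, cartSym V m G χ (stdVec ⇑f m i (σ • j)) =
      χ σ⁻¹ • cartSym V m G χ (stdVec ⇑f m i j) := by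
    intro σ
    have hsum : ∑ τ : ↥G, χ τ • CartQ V m ↑τ (stdVec ⇑f m i (σ • j)) =
        χ σ⁻¹ • ∑ τ : ↥G, χ τ • CartQ V m ↑τ (stdVec ⇑f m i j) := by
      rw [Finset.smul_sum]
      refine Fintype.sum_equiv (Equiv.mulRight σ) _ _ ?_
      intro τ
      have hs : χ σ⁻¹ * χ (τ * σ) = χ τ := by
        calc χ σ⁻¹ * χ (τ * σ) = χ σ⁻¹ * (χ τ * χ σ) := by rw [hmul]
        _ = χ τ * (χ σ⁻¹ * χ σ) := by ring
        _ = χ τ := by rw [← hmul, inv_mul_cancel, hlin, mul_one]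
      have hQQ : CartQ V m ↑τ (stdVec ⇑f m i (σ • j)) =
          CartQ V m ↑(τ * σ) (stdVec ⇑f m i j) := by
        have : (σ • j) = (σ : Equiv.Perm (Fin m)) j := rfl
        rw [this, hQ, hQ]
        congr 1
      simp only [Equiv.coe_mulRight, smul_smul, hs, hQQ]
    simp only [cartSym, LinearMap.smul_apply, LinearMap.coe_sum, LinearMap.sum_apply,
      Finset.sum_apply, hlin]
    rw [hsum, smul_comm]
  refine ⟨key, ?_⟩
  set v := cartSym V m G χ (stdVec ⇑f m i j) with hv_def
  have hS : (∑ g : MulAction.stabilizer G j, χ (g : ↥G)) ≠ 0 := by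
    intro h
    apply hj
    unfold charInnerTriv
    rw [h, mul_zero]
  have hvj : v j = ((Nat.card ↥G : ℂ)⁻¹ *
      ∑ g : MulAction.stabilizer G j, χ (g : ↥G)) • f i := by
    have ev : ∀ (w : ↥G → CartPow V m), (∑ x : ↥G, w x) j = ∑ x : ↥G, w x j := by
      intro w
      let e : CartPow V m →ₗ[ℂ] V :=
        { toFun := fun u => u j, map_add' := fun _ _ => rfl, map_smul' := fun _ _ => rfl }
      exact map_sum e w Finset.univ
    have h1 : v j = (χ 1 / (Nat.card ↥G : ℂ)) •
        ∑ τ : ↥G, χ τ • stdVec ⇑f m i j ((τ : Equiv.Perm (Fin m))⁻¹ j) := by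
      simp only [hv_def, cartSym, LinearMap.smul_apply, LinearMap.coe_sum,
        LinearMap.sum_apply]
      rw [PiLp.smul_apply, ev]
      congr 1
    rw [h1, hlin]
    have hstab : ∑ τ ∈ Finset.univ.filter (fun τ : ↥G => τ ∈ MulAction.stabilizer G j),
        χ τ = ∑ g : MulAction.stabilizer G j, χ (g : ↥G) :=
      Finset.sum_subtype _ (fun x => by simp) χ
    have h2 : ∑ τ : ↥G, χ τ • stdVec ⇑f m i j ((τ : Equiv.Perm (Fin m))⁻¹ j) =
        (∑ g : MulAction.stabilizer G j, χ (g : ↥G)) • f i := by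
      have h3 : ∀ τ : ↥G, χ τ • stdVec ⇑f m i j ((τ : Equiv.Perm (Fin m))⁻¹ j) =
          if τ ∈ MulAction.stabilizer G j then χ τ • f i else 0 := by
        intro τ
        have : (τ ∈ MulAction.stabilizer G j) ↔ ((τ : Equiv.Perm (Fin m))⁻¹ j = j) := by
          rw [MulAction.mem_stabilizer_iff]
          have hsm : τ • j = (τ : Equiv.Perm (Fin m)) j := rfl
          rw [hsm, Equiv.Perm.inv_eq_iff_eq, eq_comm]
        simp only [stdVec, PiLp.toLp_apply, this]
        rw [smul_ite, smul_zero]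
      calc ∑ τ : ↥G, χ τ • stdVec ⇑f m i j ((τ : Equiv.Perm (Fin m))⁻¹ j)
          = ∑ τ : ↥G, (if τ ∈ MulAction.stabilizer G j then χ τ • f i else 0) :=
            Finset.sum_congr rfl (fun τ _ => h3 τ)
        _ = ∑ τ ∈ Finset.univ.filter (fun τ : ↥G => τ ∈ MulAction.stabilizer G j),
              χ τ • f i := by rw [Finset.sum_filter]
        _ = ((∑ τ ∈ Finset.univ.filter (fun τ : ↥G => τ ∈ MulAction.stabilizer G j),
              χ τ : ℂ)) • f i := by rw [Finset.sum_smul]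
        _ = (∑ g : MulAction.stabilizer G j, χ (g : ↥G)) • f i := by rw [hstab]
    rw [h2, smul_smul, div_eq_mul_inv, one_mul]
  have hfne : f i ≠ 0 := f.orthonormal.ne_zero i
  have hvne : v ≠ 0 := by
    intro h
    have : v j = 0 := by rw [h]; rfl
    rw [hvj] at this
    exact smul_ne_zero (mul_ne_zero (inv_ne_zero hNG) hS) hfne this
  have hspan : Submodule.span ℂ
      (Set.range fun σ : ↥G => cartSym V m G χ (stdVec ⇑f m i (σ • j))) = ℂ ∙ v := by
    apply le_antisymm
    · rw [Submodule.span_le]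
      rintro _ ⟨σ, rfl⟩
      simp only [key]
      exact Submodule.smul_mem _ _ (Submodule.mem_span_singleton_self v)
    · rw [Submodule.span_singleton_le_iff_mem]
      apply Submodule.subset_span
      refine ⟨1, ?_⟩
      simp only [key]
      rw [inv_one, hlin, one_smul]
  rw [hspan]
  exact finrank_span_singleton hvne
end

section
/- For every 1 ≤ i ≤ n and every j with [λ, 1_{G_j}] ≠ 0, the cyclic subspace V^λ_{ij} = span{f^λ_{iσ(j)} : σ ∈ G} has dimension λ(1)·[λ, 1_{G_j}]. -/
open scoped Classical InnerProductSpace ComplexConjugate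

open CategoryTheory Module FDRep
noncomputable section AuxA
set_option linter.unusedSectionVars false
set_option maxHeartbeats 1000000
variable {H : Type} [Group H] [Fintype H]

lemma schur_scalar (W : FDRep ℂ H) [Simple W] (A : W →ₗ[ℂ] W)
    (hA : ∀ g : H, (W.ρ g) * A = A * (W.ρ g)) : ∃ c : ℂ, A = c • LinearMap.id := by
  let F : W ⟶ W := ⟨InducedCategory.homMk (ModuleCat.ofHom A), fun g => by ext x; exact (LinearMap.congr_fun (hA g) x).symm⟩
  obtain ⟨c, hc⟩ := CategoryTheory.endomorphism_simple_eq_smul_id ℂ F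
  refine ⟨c, ?_⟩
  have h2 := congrArg Action.Hom.hom hc
  rw [Action.smul_hom, Action.id_hom] at h2
  have h3 := congrArg (fun x => x.hom.hom) h2
  refine h3.symm.trans ?_
  ext x
  rfl

lemma finrank_ne_zero_of_simple (W : FDRep ℂ H) [Simple W] : (finrank ℂ W : ℂ) ≠ 0 := by
  have h1 : (𝟙 W : W ⟶ W) ≠ 0 := CategoryTheory.id_nonzero W
  have hfr : finrank ℂ W ≠ 0 := by
    intro h
    apply h1
    have hs : Subsingleton W := Module.finrank_zero_iff (R := ℂ) (M := W) |>.mp h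
    apply Action.hom_ext
    ext x
    exact Subsingleton.elim (α := W) _ _
  exact_mod_cast hfr

lemma char_self_sum (W : FDRep ℂ H) [Simple W] :
    ∑ τ : H, W.character τ * W.character τ⁻¹ = (Fintype.card H : ℂ) := by
  have hcard : ((Fintype.card H) : ℂ) ≠ 0 := by exact_mod_cast Fintype.card_ne_zero
  haveI : Invertible (Nat.card H : ℂ) :=
    invertibleOfNonzero (by rw [Nat.card_eq_fintype_card]; exact hcard)
  have h := FDRep.char_orthonormal W W
  rw [if_pos ⟨Iso.refl W⟩, Nat.card_eq_fintype_card, inv_mul_eq_one₀ hcard] at h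
  exact h.symm

/-- convolution identity -/
lemma char_conv_s5 (W : FDRep ℂ H) [Simple W] (g : H) :
    W.character 1 * ∑ τ : H, W.character τ * W.character (τ⁻¹ * g) =
      (Fintype.card H : ℂ) * W.character g := by
  classical
  set A : W →ₗ[ℂ] W := ∑ τ : H, W.character τ • (W.ρ τ⁻¹) with hAdef
  have hA : ∀ h : H, (W.ρ h) * A = A * (W.ρ h) := by
    intro h
    rw [hAdef, Finset.mul_sum, Finset.sum_mul]
    refine Fintype.sum_equiv (MulAut.conj h).toEquiv _ _ (fun τ => ?_)
    simp only [MulAut.conj_apply, MulEquiv.toEquiv_eq_coe, MulEquiv.coe_toEquiv]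
    rw [char_conj, mul_smul_comm, smul_mul_assoc]
    congr 1
    rw [← map_mul, ← map_mul]
    congr 1
    group
  obtain ⟨c, hc⟩ := schur_scalar W A hA
  have key : ∀ g : H, ∑ τ : H, W.character τ * W.character (τ⁻¹ * g) = c * W.character g := by
    intro g
    have h1 : A * (W.ρ g) = c • (W.ρ g) := by rw [hc]; ext x; simp
    have h2 := congrArg (LinearMap.trace ℂ W) h1
    rw [LinearMap.map_smul, hAdef, Finset.sum_mul, map_sum] at h2
    have h3 : ∀ τ : H, LinearMap.trace ℂ W ((W.character τ • W.ρ τ⁻¹) * W.ρ g) =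
        W.character τ * W.character (τ⁻¹ * g) := by
      intro τ
      rw [smul_mul_assoc, LinearMap.map_smul, smul_eq_mul]
      congr 1
      rw [show (W.ρ τ⁻¹) * (W.ρ g) = W.ρ (τ⁻¹ * g) from (map_mul _ _ _).symm]
      rfl
    rw [Finset.sum_congr rfl (fun τ _ => h3 τ)] at h2
    rw [h2, smul_eq_mul]
    rfl
  have hc1 : c * W.character 1 = (Fintype.card H : ℂ) := by
    have hk := key 1
    simp only [mul_one] at hk
    rw [← hk, ← char_self_sum W]
  rw [key g, ← hc1]
  ring

section Cart
variable (V : Type*) [NormedAddCommGroup V] [InnerProductSpace ℂ V] (m : ℕ)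
  (G : Subgroup (Equiv.Perm (Fin m))) (χ : ↥G → ℂ)

lemma CartQ_apply (σ : Equiv.Perm (Fin m)) (u : CartPow V m) (a : Fin m) :
    CartQ V m σ u a = u (σ⁻¹ a) := rfl

lemma CartQ_mul (σ τ : Equiv.Perm (Fin m)) :
    CartQ V m (σ * τ) = CartQ V m σ * CartQ V m τ := by
  ext u a
  show u ((σ * τ)⁻¹ a) = u (τ⁻¹ (σ⁻¹ a))
  rw [mul_inv_rev]
  rfl

lemma cartSym_idem (hχ : IsIrredChar χ) :
    (cartSym V m G χ) * (cartSym V m G χ) = cartSym V m G χ := by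
  classical
  obtain ⟨W, hW, hchar⟩ := hχ
  haveI : CategoryTheory.Simple W := hW
  set d : ℂ := χ 1 with hd
  set N : ℂ := (Nat.card ↥G : ℂ) with hN
  have hdW : d = (finrank ℂ W : ℂ) := by
    rw [hd, hchar]; exact_mod_cast FDRep.char_one W
  have hdne : d ≠ 0 := by rw [hdW]; exact finrank_ne_zero_of_simple W
  have hNne : N ≠ 0 := by
    rw [hN, Nat.card_eq_fintype_card]
    exact_mod_cast Fintype.card_ne_zero
  have hconv : ∀ g : ↥G, d * ∑ σ : ↥G, χ σ * χ (σ⁻¹ * g) = N * χ g := by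
    intro g
    rw [hd, hN, Nat.card_eq_fintype_card, hchar]
    exact char_conv_s5 W g
  set Q : ↥G → (CartPow V m →ₗ[ℂ] CartPow V m) :=
    fun τ => CartQ V m (τ : Equiv.Perm (Fin m)) with hQ
  set S : CartPow V m →ₗ[ℂ] CartPow V m := ∑ τ : ↥G, χ τ • Q τ with hS
  have step1 : ∀ σ τ : ↥G, (χ σ • Q σ) * (χ τ • Q τ) = (χ σ * χ τ) • Q (σ * τ) := by
    intro σ τ
    rw [smul_mul_assoc, mul_smul_comm, smul_smul, hQ]
    simp only [Subgroup.coe_mul, CartQ_mul]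
  have h1 : ∀ σ : ↥G, ∑ τ : ↥G, (χ σ • Q σ) * (χ τ • Q τ)
      = ∑ g : ↥G, (χ σ * χ (σ⁻¹ * g)) • Q g := by
    intro σ
    refine Fintype.sum_equiv (Equiv.mulLeft σ) _ _ (fun τ => ?_)
    rw [step1]
    simp only [Equiv.coe_mulLeft, inv_mul_cancel_left]
  have hSS : d • (S * S) = N • S := by
    calc d • (S * S) = d • ∑ σ : ↥G, ∑ g : ↥G, (χ σ * χ (σ⁻¹ * g)) • Q g := by
          rw [hS, Finset.sum_mul_sum]
          congr 1
          exact Finset.sum_congr rfl (fun σ _ => h1 σ)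
      _ = ∑ g : ↥G, (d * ∑ σ : ↥G, χ σ * χ (σ⁻¹ * g)) • Q g := by
          rw [Finset.sum_comm, Finset.smul_sum]
          exact Finset.sum_congr rfl (fun g _ => by rw [← Finset.sum_smul, smul_smul])
      _ = ∑ g : ↥G, (N * χ g) • Q g := Finset.sum_congr rfl (fun g _ => by rw [hconv g])
      _ = N • S := by
          rw [hS, Finset.smul_sum]
          exact Finset.sum_congr rfl (fun g _ => by rw [smul_smul])
  have hSS' : S * S = (d⁻¹ * N) • S := by
    rw [← smul_smul, ← hSS, smul_smul, inv_mul_cancel₀ hdne, one_smul]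
  have hform : cartSym V m G χ = (d / N) • S := rfl
  rw [hform, smul_mul_smul_comm, hSS', smul_smul]
  congr 1
  field_simp

end Cart

section Main
variable {V : Type*} [NormedAddCommGroup V] [InnerProductSpace ℂ V] {n m : ℕ}

lemma arith_helper (oC sC SC d NC : ℂ) (hos : oC * sC = NC) (hs : sC ≠ 0) (hN : NC ≠ 0) :
    oC * (d / NC * SC) = d * (sC⁻¹ * SC) := by
  have ho : oC ≠ 0 := fun h => hN (by rw [← hos, h, zero_mul])
  subst hos
  field_simp

lemma CartQ_stdVec (f : Fin n → V) (σ : Equiv.Perm (Fin m)) (i : Fin n) (l : Fin m) :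
    CartQ V m σ (stdVec f m i l) = stdVec f m i (σ l) := by
  ext a
  show (stdVec f m i l) (σ⁻¹ a) = stdVec f m i (σ l) a
  simp only [stdVec]
  congr 1
  simp only [eq_iff_iff]
  constructor
  · rintro rfl; simp
  · rintro rfl; simp

lemma stdVec_orthonormal (f : Fin n → V) (hf : Orthonormal ℂ f) (i : Fin n) :
    Orthonormal ℂ (fun l : Fin m => stdVec f m i l) := by
  rw [orthonormal_iff_ite] at hf ⊢
  intro l l'
  have : ⟪stdVec f m i l, stdVec f m i l'⟫_ℂ =
      ∑ a : Fin m, ⟪stdVec f m i l a, stdVec f m i l' a⟫_ℂ := PiLp.inner_apply _ _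
  rw [this]
  simp only [stdVec]
  rcases eq_or_ne l l' with rfl | hne
  · simp only [if_pos rfl]
    rw [Finset.sum_eq_single l]
    · have h1 := hf i i
      simp at h1
      simp [h1]
    · intro a _ ha
      rw [if_neg ha]
      simp
    · simp
  · rw [if_neg hne]
    apply Finset.sum_eq_zero
    intro a _
    rcases eq_or_ne a l' with rfl | h1
    · rw [if_neg (fun h => hne (h.symm))]
      simp
    · rw [show (if a = l' then f i else (0:V)) = 0 from if_neg h1]
      simp

end Main

/-- `dim V^χ_{ij} = χ(1)·[χ, 1_{G_j}]` for every `i` and every `j` with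
`[χ, 1_{G_j}] ≠ 0`. -/
theorem finrank_cyclic_subspace
    (V : Type*) [NormedAddCommGroup V] [InnerProductSpace ℂ V] [FiniteDimensional ℂ V]
    {n m : ℕ} (f : OrthonormalBasis (Fin n) ℂ V)
    (G : Subgroup (Equiv.Perm (Fin m))) (χ : ↥G → ℂ) (hχ : IsIrredChar χ)
    (i : Fin n) (j : Fin m) (hj : charInnerTriv G χ j ≠ 0) :
    (Module.finrank ℂ (Submodule.span ℂ
      (Set.range fun σ : ↥G => cartSym V m G χ (stdVec ⇑f m i (σ • j)))) : ℂ) =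
      χ 1 * charInnerTriv G χ j := by
  classical
  obtain ⟨W, hW, hchar⟩ := hχ
  haveI : CategoryTheory.Simple W := hW
  set P : CartPow V m →ₗ[ℂ] CartPow V m := cartSym V m G χ with hP
  have hPP : P * P = P := cartSym_idem V m G χ ⟨W, hW, hchar⟩
  set O : Set (Fin m) := MulAction.orbit (↥G) j with hO
  set v : ↥O → CartPow V m := fun l => stdVec ⇑f m i ↑l with hv
  have hon : Orthonormal ℂ v :=
    (stdVec_orthonormal ⇑f f.orthonormal i).comp Subtype.val Subtype.val_injective
  have hli : LinearIndependent ℂ v := hon.linearIndependent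
  set U : Submodule ℂ (CartPow V m) := Submodule.span ℂ (Set.range v) with hU
  set b : Basis ↥O ℂ U := Basis.span hli with hb
  have hbl : ∀ l : ↥O, (b l : CartPow V m) = v l := fun l => congrArg Subtype.val (Basis.span_apply hli l)
  -- orbit membership facts
  have horbmem : ∀ (τ : ↥G) (l : Fin m), l ∈ O → τ • l ∈ O := by
    intro τ l hl
    obtain ⟨σ, rfl⟩ := hl
    exact ⟨τ * σ, (mul_smul τ σ j).symm⟩
  have hmemU : ∀ l : Fin m, l ∈ O → stdVec ⇑f m i l ∈ U := fun l hl =>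
    Submodule.subset_span ⟨⟨l, hl⟩, rfl⟩
  -- Q maps U to U
  have hQsmul : ∀ (τ : ↥G) (l : Fin m),
      CartQ V m (τ : Equiv.Perm (Fin m)) (stdVec ⇑f m i l) = stdVec ⇑f m i (τ • l) :=
    fun τ l => CartQ_stdVec ⇑f _ i l
  have hQU : ∀ (τ : ↥G), ∀ u ∈ U, CartQ V m (τ : Equiv.Perm (Fin m)) u ∈ U := by
    intro τ u hu
    induction hu using Submodule.span_induction with
    | mem x hx =>
        obtain ⟨⟨l, hl⟩, rfl⟩ := hx
        rw [hv]
        rw [hQsmul τ l]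
        exact hmemU _ (horbmem τ l hl)
    | zero => simp
    | add x y hx hy ihx ihy => rw [map_add]; exact Submodule.add_mem _ ihx ihy
    | smul a x hx ihx => rw [map_smul]; exact Submodule.smul_mem _ _ ihx
  have hPapp : ∀ u : CartPow V m, P u = (χ 1 / (Nat.card ↥G : ℂ)) •
      ∑ τ : ↥G, χ τ • CartQ V m (τ : Equiv.Perm (Fin m)) u := by
    intro u
    rw [hP]
    show ((χ 1 / (Nat.card ↥G : ℂ)) • ∑ τ : ↥G, χ τ • CartQ V m (τ : Equiv.Perm (Fin m))) u = _
    rw [LinearMap.smul_apply, LinearMap.sum_apply]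
    congr 1
  have hPU : ∀ u ∈ U, P u ∈ U := by
    intro u hu
    rw [hPapp u]
    exact Submodule.smul_mem _ _ (Submodule.sum_mem _ fun τ _ =>
      Submodule.smul_mem _ _ (hQU τ u hu))
  -- the span in the goal is map P U
  have hrange : (Set.range fun σ : ↥G => stdVec ⇑f m i (σ • j)) = Set.range v := by
    ext x
    constructor
    · rintro ⟨σ, rfl⟩; exact ⟨⟨σ • j, ⟨σ, rfl⟩⟩, rfl⟩
    · rintro ⟨⟨l, hl⟩, rfl⟩
      obtain ⟨σ, rfl⟩ := hl
      exact ⟨σ, rfl⟩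
  have hSmap : Submodule.span ℂ
      (Set.range fun σ : ↥G => cartSym V m G χ (stdVec ⇑f m i (σ • j))) =
      Submodule.map P U := by
    rw [hU, ← hrange, Submodule.map_span, ← Set.range_comp]
    rfl
  -- restrict P to U
  set e : U →ₗ[ℂ] U := P.restrict hPU with he
  have hecoe : ∀ x : U, (e x : CartPow V m) = P x := fun x => rfl
  have hidem : e ∘ₗ e = e := by
    apply LinearMap.ext
    intro x
    apply Subtype.ext
    show P (P x) = P x
    rw [← Module.End.mul_apply, hPP]
  have hproj : LinearMap.IsProj (LinearMap.range e) e := by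
    constructor
    · intro x; exact LinearMap.mem_range_self e x
    · rintro x ⟨y, rfl⟩
      show (e ∘ₗ e) y = e y
      rw [hidem]
  have htr : LinearMap.trace ℂ U e = (Module.finrank ℂ (LinearMap.range e) : ℂ) :=
    hproj.trace
  have hsub : (LinearMap.range e).map U.subtype = Submodule.map P U := by
    ext x
    constructor
    · rintro ⟨w, ⟨u, rfl⟩, rfl⟩
      exact ⟨↑u, u.2, rfl⟩
    · rintro ⟨u, hu, rfl⟩
      exact ⟨e ⟨u, hu⟩, ⟨⟨u, hu⟩, rfl⟩, rfl⟩
  have hfr : Module.finrank ℂ (Submodule.map P U) = Module.finrank ℂ (LinearMap.range e) := by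
    rw [← hsub, Submodule.finrank_map_subtype_eq]
  -- now compute the trace of e
  set N : ℂ := (Nat.card ↥G : ℂ) with hN
  set c : ℂ := χ 1 / N with hc
  have hebl : ∀ l : ↥O, e (b l) =
      c • ∑ τ : ↥G, χ τ • b ⟨τ • (l : Fin m), horbmem τ l l.2⟩ := by
    intro l
    apply Subtype.coe_injective
    show ((e (b l) : U) : CartPow V m) =
      ((c • ∑ τ : ↥G, χ τ • b ⟨τ • (l : Fin m), horbmem τ l l.2⟩ : U) : CartPow V m)
    have h1 : ((e (b l) : U) : CartPow V m) = P (b l) := rfl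
    rw [h1, hbl l, hPapp (v l)]
    push_cast [Submodule.coe_smul, AddSubmonoidClass.coe_finset_sum]
    congr 1
    refine Finset.sum_congr rfl (fun τ _ => ?_)
    rw [hbl ⟨τ • (l : Fin m), horbmem τ l l.2⟩]
    congr 1
    exact hQsmul τ (l : Fin m)
  have hdiag : ∀ l : ↥O, b.repr (e (b l)) l =
      c * ∑ τ : ↥G, (if τ • (l : Fin m) = (l : Fin m) then χ τ else 0) := by
    intro l
    rw [hebl l, map_smul, map_sum, Finsupp.smul_apply, smul_eq_mul]
    congr 1
    rw [Finsupp.finset_sum_apply]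
    refine Finset.sum_congr rfl (fun τ _ => ?_)
    rw [map_smul, Finsupp.smul_apply, Basis.repr_self, Finsupp.single_apply, smul_eq_mul]
    by_cases hcond : τ • (l : Fin m) = (l : Fin m)
    · rw [if_pos hcond, if_pos (Subtype.ext hcond), mul_one]
    · rw [if_neg hcond, if_neg (fun h => hcond (congrArg Subtype.val h)), mul_zero]
  have hT : ∀ x, x ∈ O → (∑ τ : ↥G, if τ • x = x then χ τ else 0) =
      ∑ τ : ↥G, if τ • j = j then χ τ else 0 := by
    intro x hx
    obtain ⟨σ, rfl⟩ := hx
    refine (Fintype.sum_equiv (MulAut.conj σ).toEquiv _ _ (fun τ => ?_)).symm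
    simp only [MulEquiv.toEquiv_eq_coe, MulEquiv.coe_toEquiv, MulAut.conj_apply]
    have hcond : (σ * τ * σ⁻¹) • σ • j = σ • j ↔ τ • j = j := by
      rw [mul_smul, mul_smul, inv_smul_smul, smul_left_cancel_iff]
    have hval : χ (σ * τ * σ⁻¹) = χ τ := by rw [hchar]; exact FDRep.char_conj W τ σ
    rw [hval]
    by_cases hcd : τ • j = j
    · rw [if_pos hcd]; exact (if_pos (hcond.mpr hcd)).symm
    · rw [if_neg hcd]; exact (if_neg (fun h => hcd (hcond.mp h))).symm
  have hTj : (∑ τ : ↥G, if τ • j = j then χ τ else 0) =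
      ∑ g : MulAction.stabilizer ↥G j, χ ↑g := by
    rw [← Finset.sum_filter]
    exact Finset.sum_subtype _ (fun x => by
      simp [MulAction.mem_stabilizer_iff]) χ
  have htrace : LinearMap.trace ℂ U e =
      (Nat.card ↥O : ℂ) * (c * ∑ g : MulAction.stabilizer ↥G j, χ ↑g) := by
    rw [LinearMap.trace_eq_matrix_trace ℂ b e, Matrix.trace]
    have : ∀ l : ↥O, Matrix.diag (LinearMap.toMatrix b b e) l =
        c * ∑ g : MulAction.stabilizer ↥G j, χ ↑g := by
      intro l
      show LinearMap.toMatrix b b e l l = _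
      rw [LinearMap.toMatrix_apply, hdiag l, hT (l : Fin m) l.2, hTj]
    rw [Finset.sum_congr rfl (fun l _ => this l), Finset.sum_const, Finset.card_univ,
      nsmul_eq_mul, Nat.card_eq_fintype_card]
  -- orbit-stabilizer
  have horbstab : (Nat.card ↥O : ℂ) * (Nat.card (MulAction.stabilizer ↥G j) : ℂ) = N := by
    rw [hN]
    norm_cast
    rw [hO, Nat.card_eq_fintype_card, Nat.card_eq_fintype_card, Nat.card_eq_fintype_card]
    exact MulAction.card_orbit_mul_card_stabilizer_eq_card_group ↥G j
  have hstabne : ((Nat.card (MulAction.stabilizer ↥G j) : ℂ)) ≠ 0 := by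
    have : Nat.card (MulAction.stabilizer ↥G j) ≠ 0 := Nat.card_pos.ne'
    exact_mod_cast this
  have hNne : N ≠ 0 := by
    rw [hN]
    have : Nat.card ↥G ≠ 0 := Nat.card_pos.ne'
    exact_mod_cast this
  -- put it together
  rw [hSmap, hfr, ← htr, htrace, charInnerTriv, hc]
  exact arith_helper _ _ _ _ _ horbstab hstabne hNne
end AuxA
end

section
/- If G is the cyclic subgroup of S_m generated by the m-cycle (1 2 ⋯ m), then for every irreducible character λ of G, dim V^λ(G) = dim V. -/
open scoped Classical InnerProductSpace ComplexConjugate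

open CategoryTheory Module in
theorem aux_char {G : Type} [Group G] (hcomm : ∀ a b : G, a * b = b * a) (χ : G → ℂ)
    (hχ : IsIrredChar χ) :
    ∃ (n : ℕ) (c : G → ℂ), 0 < n ∧ (∀ g, χ g = n * c g) ∧ c 1 = 1 ∧
      ∀ g h, c (g * h) = c g * c h := by
  obtain ⟨W, hS, rfl⟩ : ∃ W : FDRep ℂ G, CategoryTheory.Simple W ∧ χ = W.character := hχ
  -- scalar for each g
  have key : ∀ g : G, ∃ c : ℂ, W.ρ g = c • LinearMap.id := by
    intro g
    let f : W ⟶ W := ⟨FGModuleCat.ofHom (W.ρ g), fun h => by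
      ext x
      show W.ρ g (W.ρ (h : G) x) = W.ρ (h : G) (W.ρ g x)
      rw [← Module.End.mul_apply, ← Module.End.mul_apply, ← map_mul, ← map_mul, hcomm (h : G) g]⟩
    obtain ⟨c, hc⟩ := endomorphism_simple_eq_smul_id (𝕜 := ℂ) f
    refine ⟨c, ?_⟩
    have := congrArg Action.Hom.hom hc
    ext x
    have h2 := congrFun (congrArg (fun (φ : W.V ⟶ W.V) => (φ : W → W)) this) x
    exact h2.symm
  choose c hc using key
  have hnt : Nontrivial W := by
    by_contra hn
    have hss : Subsingleton W := not_nontrivial_iff_subsingleton.mp hn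
    have : Subsingleton ↑W.V.obj := hss
    have : (𝟙 W) = (0 : W ⟶ W) := by
      apply Action.hom_ext
      ext x
      exact Subsingleton.elim _ _
    exact id_nonzero W this
  have hn : 0 < finrank ℂ W := finrank_pos
  obtain ⟨x, hx⟩ := exists_ne (0 : W)
  have hinj : ∀ a b : ℂ, a • x = b • x → a = b := by
    intro a b hab
    have : (a - b) • x = 0 := by rw [sub_smul, hab, sub_self]
    rcases smul_eq_zero.mp this with h | h
    · exact sub_eq_zero.mp h
    · exact absurd h hx
  refine ⟨finrank ℂ W, c, hn, ?_, ?_, ?_⟩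
  · intro g
    show LinearMap.trace ℂ W (W.ρ g) = _
    rw [hc g, map_smul, LinearMap.trace_id, smul_eq_mul]
    ring
  · have h1 : (1 : ℂ) • x = c 1 • x := by
      conv_lhs => rw [one_smul]
      have := congrFun (congrArg (fun (f : W →ₗ[ℂ] W) => (f : W → W)) (hc 1)) x
      simpa using this
    exact (hinj _ _ h1).symm
  · intro g h
    apply hinj
    have e1 := congrFun (congrArg (fun (f : W →ₗ[ℂ] W) => (f : W → W)) (hc (g*h))) x
    have e2 := congrFun (congrArg (fun (f : W →ₗ[ℂ] W) => (f : W → W)) (hc g)) (c h • x)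
    have e3 := congrFun (congrArg (fun (f : W →ₗ[ℂ] W) => (f : W → W)) (hc h)) x
    simp only [LinearMap.smul_apply, LinearMap.id_apply] at e1 e2 e3
    rw [← e1, map_mul, Module.End.mul_apply, e3, e2, smul_smul]

theorem aux_main (V : Type*) [NormedAddCommGroup V] [InnerProductSpace ℂ V]
    [FiniteDimensional ℂ V] (m : ℕ) (i₀ : Fin m)
    (G : Subgroup (Equiv.Perm (Fin m))) (χ : ↥G → ℂ) (n : ℕ) (c : ↥G → ℂ)
    (hn : 0 < n) (hχc : ∀ g, χ g = n * c g) (hc1 : c 1 = 1)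
    (hcmul : ∀ g h, c (g * h) = c g * c h)
    (hfree : ∀ τ : ↥G, (τ : Equiv.Perm (Fin m)) i₀ = i₀ → τ = 1)
    (htrans : ∀ j : Fin m, ∃ τ : ↥G, (τ : Equiv.Perm (Fin m)) i₀ = j) :
    Module.finrank ℂ (LinearMap.range (cartSym V m G χ)) = Module.finrank ℂ V := by
  set C := cartSym V m G χ with hC
  set a : ℂ := χ 1 / (Nat.card G : ℂ) with ha
  have hcne : ∀ τ : ↥G, c τ ≠ 0 := by
    intro τ h
    have : c τ * c τ⁻¹ = 1 := by rw [← hcmul, mul_inv_cancel, hc1]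
    rw [h, zero_mul] at this
    exact zero_ne_one this
  have hχ1 : χ 1 = n := by rw [hχc, hc1, mul_one]
  have hane : a ≠ 0 := by
    rw [ha, hχ1]
    apply div_ne_zero
    · exact_mod_cast hn.ne'
    · exact_mod_cast (Nat.card_pos (α := ↥G)).ne'
  set b : ℂ := a * χ 1 with hb
  have hbne : b ≠ 0 := by
    rw [hb, hχ1]
    exact mul_ne_zero hane (by exact_mod_cast hn.ne')
  -- application formula
  have hCapp : ∀ (w : CartPow V m) (i : Fin m),
      C w i = a • ∑ τ : ↥G, χ τ • w ((τ : Equiv.Perm (Fin m))⁻¹ i) := by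
    intro w i
    show ((χ 1 / (Nat.card G : ℂ)) • ∑ τ : ↥G, χ τ • CartQ V m (τ : Equiv.Perm (Fin m))) w i = _
    rw [LinearMap.smul_apply, LinearMap.sum_apply]
    show a • ((∑ τ : ↥G, (χ τ • CartQ V m (τ : Equiv.Perm (Fin m))) w) i) = _
    congr 1
    rw [WithLp.ofLp_sum, Finset.sum_apply]
    rfl
  -- eigen relation
  have hQC : ∀ (τ : ↥G) (w : CartPow V m) (i : Fin m),
      C w ((τ : Equiv.Perm (Fin m)) i) = c τ • C w i := by
    intro τ w i
    rw [hCapp, hCapp, smul_comm]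
    congr 1
    rw [Finset.smul_sum]
    refine Fintype.sum_equiv (Equiv.mulLeft τ⁻¹) _ _ ?_
    intro ρ
    have h1 : ((((τ⁻¹ * ρ : ↥G)) : Equiv.Perm (Fin m)))⁻¹ i
        = ((ρ : Equiv.Perm (Fin m)))⁻¹ ((τ : Equiv.Perm (Fin m)) i) := by
      simp [mul_assoc]
    have h2 : c τ * χ (τ⁻¹ * ρ) = χ ρ := by
      have : c τ * c τ⁻¹ = 1 := by rw [← hcmul, mul_inv_cancel, hc1]
      rw [hχc, hcmul, hχc]
      calc c τ * (↑n * (c τ⁻¹ * c ρ)) = (c τ * c τ⁻¹) * (↑n * c ρ) := by ring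
        _ = ↑n * c ρ := by rw [this, one_mul]
    show χ ρ • w ((ρ : Equiv.Perm (Fin m))⁻¹ ((τ : Equiv.Perm (Fin m)) i))
        = c τ • χ ((Equiv.mulLeft τ⁻¹) ρ) • w ((((Equiv.mulLeft τ⁻¹) ρ : ↥G) : Equiv.Perm (Fin m))⁻¹ i)
    show χ ρ • w ((ρ : Equiv.Perm (Fin m))⁻¹ ((τ : Equiv.Perm (Fin m)) i))
        = c τ • χ (τ⁻¹ * ρ) • w ((((τ⁻¹ * ρ : ↥G)) : Equiv.Perm (Fin m))⁻¹ i)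
    rw [h1, smul_smul, h2]
  -- value at i₀ of symmetrized standard vector
  have he₀ : ∀ v : V, C (WithLp.toLp 2 (fun l => if l = i₀ then v else 0 : Fin m → V) : CartPow V m) i₀ = b • v := by
    intro v
    rw [hCapp]
    simp only [WithLp.ofLp_toLp]
    have h₀ : ∀ τ : ↥G, τ ∈ Finset.univ → τ ≠ 1 →
        χ τ • (if (((τ : Equiv.Perm (Fin m)))⁻¹ i₀) = i₀ then v else 0) = 0 := by
      intro τ _ hτ
      have : ¬ ((((τ : Equiv.Perm (Fin m)))⁻¹ i₀) = i₀) := by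
        intro h
        apply hτ
        have h2 : ((τ⁻¹ : ↥G) : Equiv.Perm (Fin m)) i₀ = i₀ := h
        have := hfree τ⁻¹ h2
        rwa [inv_eq_one] at this
      rw [if_neg this, smul_zero]
    have hsum : ∑ τ : ↥G, χ τ • (if (((τ : Equiv.Perm (Fin m)))⁻¹ i₀) = i₀ then v else 0)
        = χ 1 • v := by
      rw [Finset.sum_eq_single 1 h₀ (fun h => absurd (Finset.mem_univ 1) h)]
      simp
    rw [hsum, hb, smul_smul]
  -- shift relation for elements of the range
  have hshift : ∀ (w : CartPow V m) (τ : ↥G) (i : Fin m),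
      C w ((τ : Equiv.Perm (Fin m)) i) = c τ • C w i := fun w τ i => hQC τ w i
  -- the evaluation map
  let π : CartPow V m →ₗ[ℂ] V :=
    { toFun := fun u => u i₀, map_add' := fun _ _ => rfl, map_smul' := fun _ _ => rfl }
  let φ : ↥(LinearMap.range C) →ₗ[ℂ] V := π.comp (LinearMap.range C).subtype
  have hbij : Function.Bijective φ := by
    constructor
    · rw [← LinearMap.ker_eq_bot, LinearMap.ker_eq_bot']
      intro u hu
      obtain ⟨w, hw⟩ := u.2
      apply Subtype.ext
      have hu0 : (u : CartPow V m) i₀ = 0 := hu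
      ext j
      obtain ⟨τ, hτ⟩ := htrans j
      have : (u : CartPow V m) j = c τ • (u : CartPow V m) i₀ := by
        rw [← hτ, ← hw, hshift]
      rw [this, hu0, smul_zero]
      rfl
    · intro v
      refine ⟨⟨C (WithLp.toLp 2 (fun l => if l = i₀ then b⁻¹ • v else 0 : Fin m → V) : CartPow V m),
        LinearMap.mem_range_self _ _⟩, ?_⟩
      show C _ i₀ = v
      rw [he₀, smul_smul, mul_inv_cancel₀ hbne, one_smul]
  exact (LinearEquiv.ofBijective φ hbij).finrank_eq

/-- if `G` is the cyclic group generated by the `m`-cycle `(1 2 ⋯ m)`,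
then `dim V^χ(G) = dim V` for every irreducible character `χ` of `G`. -/
theorem finrank_cartSymClass_of_full_cycle
    (V : Type*) [NormedAddCommGroup V] [InnerProductSpace ℂ V] [FiniteDimensional ℂ V]
    (m : ℕ) (hm : 1 ≤ m)
    (χ : ↥(Subgroup.zpowers (finRotate m)) → ℂ) (hχ : IsIrredChar χ) :
    Module.finrank ℂ (LinearMap.range (cartSym V m (Subgroup.zpowers (finRotate m)) χ)) =
      Module.finrank ℂ V := by
  obtain ⟨n', rfl⟩ : ∃ n', m = n' + 1 := ⟨m - 1, (Nat.succ_pred_eq_of_pos hm).symm⟩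
  obtain ⟨n, c, hn, hχc, hc1, hcmul⟩ := aux_char (fun a b => Std.Commutative.comm a b) χ hχ
  open Fin.NatCast in
  have hpow : ∀ (k : ℕ) (i : Fin (n' + 1)), (finRotate (n' + 1) ^ k) i = i + (k : Fin (n' + 1)) := by
    intro k
    induction k with
    | zero => intro i; simp
    | succ k ih =>
      intro i
      rw [pow_succ, Equiv.Perm.mul_apply, ih, finRotate_succ_apply]
      push_cast
      exact (add_right_comm _ _ _).trans (add_assoc _ _ _)
  have hσm : finRotate (n' + 1) ^ (n' + 1) = 1 := by
    ext i
    rw [hpow]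
    simp
  have hfree : ∀ τ : ↥(Subgroup.zpowers (finRotate (n' + 1))),
      (τ : Equiv.Perm (Fin (n' + 1))) 0 = 0 → τ = 1 := by
    intro τ hτ
    obtain ⟨k, hk'⟩ := (mem_powers_iff_mem_zpowers).mpr τ.2
    have hk : finRotate (n' + 1) ^ k = (τ : Equiv.Perm (Fin (n' + 1))) := hk'
    open Fin.NatCast in have hk0 : (finRotate (n' + 1) ^ k) 0 = (k : Fin (n' + 1)) := by rw [hpow]; simp
    rw [hk] at hk0
    rw [hτ] at hk0
    have hdvd : (n' + 1) ∣ k := by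
      have := congrArg Fin.val hk0
      simpa [Fin.val_natCast, Nat.dvd_iff_mod_eq_zero] using this.symm
    obtain ⟨q, rfl⟩ := hdvd
    ext1
    rw [← hk, pow_mul, hσm, one_pow]
    rfl
  have htrans : ∀ j : Fin (n' + 1), ∃ τ : ↥(Subgroup.zpowers (finRotate (n' + 1))),
      (τ : Equiv.Perm (Fin (n' + 1))) 0 = j := by
    intro j
    refine ⟨⟨finRotate (n' + 1) ^ (j : ℕ),
      Subgroup.pow_mem _ (Subgroup.mem_zpowers (finRotate (n' + 1))) _⟩, ?_⟩
    show (finRotate (n' + 1) ^ (j : ℕ)) 0 = j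
    rw [hpow]
    simp [Fin.cast_val_eq_self]
  exact aux_main V (n' + 1) 0 _ χ n c hn hχc hc1 hcmul hfree htrans
end

section
/- Let G = ⟨σ_1⟩×⟨σ_2⟩×⋯×⟨σ_k⟩ ≤ S_m with k ≥ 2, where σ_ℓ are disjoint cycles of orders m_ℓ, and let λ = λ_{q_1}⋯λ_{q_k} with λ_{q_ℓ}(σ_ℓ^{j}) = exp(2πi q_ℓ j/m_ℓ). Then dim V^λ(G) = (dim V)·[ (m − Σ_ℓ m_ℓ)·[λ, 1_G] + Σ_{j=1}^{k} Π_{ℓ≠j} (1/m_ℓ) Σ_{d|m_ℓ} c_{m_ℓ/d}(q_ℓ) ], where c_n(q) is the Ramanujan sum. -/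
open scoped Classical InnerProductSpace ComplexConjugate

section helpers

lemma Multiset.noncommProd_congr'' {α : Type*} [Monoid α] {s t : Multiset α} (h : s = t)
    (ps : {x | x ∈ s}.Pairwise Commute) (pt : {x | x ∈ t}.Pairwise Commute) :
    s.noncommProd ps = t.noncommProd pt := by subst h; rfl

lemma noncommProd_univ_fin {M : Type*} [Monoid M] {k : ℕ} (g : Fin k → M) (comm) :
    Finset.univ.noncommProd g comm = (List.ofFn g).prod := by
  have hs : Multiset.map g (Finset.univ.val : Multiset (Fin k))
      = ((List.ofFn g : List M) : Multiset M) := by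
    rw [Fin.univ_def, List.ofFn_eq_map]
    rfl
  have pc : {x | x ∈ ((List.ofFn g : List M) : Multiset M)}.Pairwise Commute :=
    hs ▸ Finset.noncommProd_lemma Finset.univ g comm
  rw [Finset.noncommProd]
  exact (Multiset.noncommProd_congr'' hs _ pc).trans (Multiset.noncommProd_coe _ pc)

open Real in
lemma exp_nat_mod (n a qq : ℕ) :
    Complex.exp (2 * π * Complex.I * qq * ((a % n : ℕ) : ℂ) / n)
      = Complex.exp (2 * π * Complex.I * qq * (a : ℂ) / n) := by
  rcases Nat.eq_zero_or_pos n with rfl | hn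
  · simp
  have hn' : (n : ℂ) ≠ 0 := Nat.cast_ne_zero.mpr hn.ne'
  conv_rhs => rw [← Nat.mod_add_div a n]
  have : (2 * (π:ℂ) * Complex.I * qq * ((a % n + n * (a / n) : ℕ) : ℂ) / n)
      = 2 * π * Complex.I * qq * ((a % n : ℕ) : ℂ) / n
        + ((qq * (a / n) : ℕ) : ℂ) * (2 * π * Complex.I) := by
    push_cast
    field_simp
  rw [this, Complex.exp_add, Complex.exp_nat_mul_two_pi_mul_I, mul_one]

open Equiv.Perm in
lemma support_card_list_prod {β : Type*} [DecidableEq β] [Fintype β]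
    (l : List (Equiv.Perm β)) (h : l.Pairwise Equiv.Perm.Disjoint) :
    l.prod.support.card = (l.map (fun g => g.support.card)).sum := by
  induction l with
  | nil => simp
  | cons a t ih =>
    have hpc := List.pairwise_cons.mp h
    have hd : Equiv.Perm.Disjoint a t.prod := disjoint_prod_right t hpc.1
    rw [List.prod_cons, hd.card_support_mul, List.map_cons, List.sum_cons, ih hpc.2]

open Equiv.Perm in
lemma list_prod_eq_one_mem {β : Type*} [DecidableEq β] [Fintype β]
    (l : List (Equiv.Perm β)) (h : l.Pairwise Equiv.Perm.Disjoint)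
    (hp : l.prod = 1) : ∀ g ∈ l, g = 1 := by
  induction l with
  | nil => simp
  | cons a t ih =>
    have hpc := List.pairwise_cons.mp h
    have hd : Equiv.Perm.Disjoint a t.prod := disjoint_prod_right t hpc.1
    rw [List.prod_cons] at hp
    have hsupp := congrArg Equiv.Perm.support hp
    rw [hd.support_mul, support_one, Finset.union_eq_empty] at hsupp
    have ha : a = 1 := support_eq_empty_iff.mp hsupp.1
    have ht : t.prod = 1 := support_eq_empty_iff.mp hsupp.2
    intro g hg
    rcases List.mem_cons.mp hg with rfl | hg
    · exact ha
    · exact ih hpc.2 ht g hg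

lemma sum_zmod_val (n : ℕ) [NeZero n] (F : ℕ → ℂ) :
    ∑ x : ZMod n, F x.val = ∑ t ∈ Finset.range n, F t := by
  refine Finset.sum_nbij' (fun x => x.val) (fun t => (t : ZMod n)) ?_ ?_ ?_ ?_ ?_
  · intro x _; exact Finset.mem_range.mpr (ZMod.val_lt x)
  · intro t _; exact Finset.mem_univ _
  · intro x _; exact ZMod.natCast_rightInverse x
  · intro t ht; exact ZMod.val_natCast_of_lt (Finset.mem_range.mp ht)
  · intro x _; rfl

noncomputable def cycHom {m : ℕ} (σ0 : Equiv.Perm (Fin m)) (n : ℕ) [NeZero n]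
    (h : orderOf σ0 = n) : Multiplicative (ZMod n) →* Equiv.Perm (Fin m) where
  toFun x := σ0 ^ (Multiplicative.toAdd x).val
  map_one' := by
    show σ0 ^ (Multiplicative.toAdd (1 : Multiplicative (ZMod n))).val = 1
    rw [toAdd_one, ZMod.val_zero, pow_zero]
  map_mul' x y := by
    show σ0 ^ (Multiplicative.toAdd (x * y)).val
      = σ0 ^ (Multiplicative.toAdd x).val * σ0 ^ (Multiplicative.toAdd y).val
    rw [toAdd_mul, ZMod.val_add]
    rw [show ((Multiplicative.toAdd x).val + (Multiplicative.toAdd y).val) % n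
        = ((Multiplicative.toAdd x).val + (Multiplicative.toAdd y).val) % orderOf σ0 by rw [h]]
    rw [pow_mod_orderOf, pow_add]

end helpers

open Finset Complex Real in
lemma ramanujan_div_sum (n q : ℕ) (hn : 0 < n) :
    ∑ d ∈ n.divisors, ramanujanSum (n / d) q
      = ∑ t ∈ Finset.range n, Complex.exp (2 * π * I * q * t / n) := by
  rw [Nat.sum_div_divisors n (fun d => ramanujanSum d q)]
  unfold ramanujanSum
  rw [Finset.sum_sigma']
  refine Finset.sum_nbij' (fun p => p.2 * (n / p.1))
    (fun t => ⟨n / Nat.gcd t n, t / Nat.gcd t n⟩) ?_ ?_ ?_ ?_ ?_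
  · rintro ⟨d, s⟩ hp
    simp only [mem_sigma, Nat.mem_divisors, mem_filter, mem_range] at hp ⊢
    obtain ⟨⟨hd, hn0⟩, hs, _⟩ := hp
    have hd0 : 0 < d := Nat.pos_of_dvd_of_pos hd hn
    have hnd0 : 0 < n / d := Nat.div_pos (Nat.le_of_dvd hn hd) hd0
    calc s * (n / d) < d * (n / d) := (Nat.mul_lt_mul_right hnd0).mpr hs
    _ = n := Nat.mul_div_cancel' hd
  · intro t ht
    simp only [mem_range] at ht
    have hg : 0 < Nat.gcd t n := Nat.gcd_pos_of_pos_right t hn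
    have hgn : Nat.gcd t n ∣ n := Nat.gcd_dvd_right t n
    have hgt : Nat.gcd t n ∣ t := Nat.gcd_dvd_left t n
    simp only [mem_sigma, Nat.mem_divisors, mem_filter, mem_range]
    refine ⟨⟨Nat.div_dvd_of_dvd hgn, hn.ne'⟩, Nat.div_lt_div_of_lt_of_dvd hgn ht, ?_⟩
    exact Nat.coprime_div_gcd_div_gcd hg
  · rintro ⟨d, s⟩ hp
    simp only [mem_sigma, Nat.mem_divisors, mem_filter, mem_range] at hp
    obtain ⟨⟨hd, hn0⟩, hs, hcop⟩ := hp
    have hd0 : 0 < d := Nat.pos_of_dvd_of_pos hd hn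
    have hnd0 : 0 < n / d := Nat.div_pos (Nat.le_of_dvd hn hd) hd0
    have hg : Nat.gcd (s * (n / d)) n = n / d := by
      have h2 : Nat.gcd (s * (n / d)) (d * (n / d)) = n / d := by
        rw [Nat.gcd_mul_right, hcop, one_mul]
      rwa [Nat.mul_div_cancel' hd] at h2
    have h1 : n / (n / d) = d := Nat.div_div_self hd hn.ne'
    simp only [hg, h1, Nat.mul_div_cancel _ hnd0]
  · intro t ht
    simp only [mem_range] at ht
    have hgn : Nat.gcd t n ∣ n := Nat.gcd_dvd_right t n
    have hgt : Nat.gcd t n ∣ t := Nat.gcd_dvd_left t n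
    simp only
    rw [Nat.div_div_self hgn hn.ne', Nat.div_mul_cancel hgt]
  · rintro ⟨d, s⟩ hp
    simp only [mem_sigma, Nat.mem_divisors, mem_filter, mem_range] at hp
    obtain ⟨⟨hd, hn0⟩, hs, hcop⟩ := hp
    have hd0 : (d : ℂ) ≠ 0 := Nat.cast_ne_zero.mpr (Nat.pos_of_dvd_of_pos hd hn).ne'
    have hn0' : (n : ℂ) ≠ 0 := Nat.cast_ne_zero.mpr hn.ne'
    congr 1
    rw [div_eq_div_iff hd0 hn0']
    have key : (s : ℂ) * n = (s * (n / d) : ℕ) * d := by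
      have : s * (n/d) * d = s * n := by rw [mul_assoc, Nat.div_mul_cancel hd]
      exact_mod_cast this.symm
    linear_combination (2 * (π:ℂ) * I * q) * key

noncomputable section
variable {V : Type*} [NormedAddCommGroup V] [InnerProductSpace ℂ V] [FiniteDimensional ℂ V]

lemma cartQ_mul (m : ℕ) (s t : Equiv.Perm (Fin m)) :
    CartQ V m (s * t) = CartQ V m s ∘ₗ CartQ V m t := by
  ext u i
  show u ((s * t)⁻¹ i) = u (t⁻¹ (s⁻¹ i))
  rw [mul_inv_rev]
  rfl

open Module LinearMap in
lemma trace_cartQ (m : ℕ) (τ : Equiv.Perm (Fin m)) :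
    trace ℂ (CartPow V m) (CartQ V m τ) =
      (finrank ℂ V : ℂ) * ((m : ℂ) - (τ.support.card : ℂ)) := by
  classical
  set bV := finBasis ℂ V with hbV
  set e := (WithLp.linearEquiv 2 ℂ (∀ _ : Fin m, V)).symm
  set b : Basis (Σ _ : Fin m, Fin (finrank ℂ V)) ℂ (CartPow V m) :=
    (Pi.basis fun _ : Fin m => bV).map e
  rw [trace_eq_matrix_trace ℂ b]
  rw [Matrix.trace]
  have hdiag : ∀ x : Σ _ : Fin m, Fin (finrank ℂ V),
      (toMatrix b b (CartQ V m τ)) x x = if τ x.1 = x.1 then 1 else 0 := by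
    rintro ⟨j, i⟩
    rw [toMatrix_apply]
    have hb : (b ⟨j, i⟩ : CartPow V m) = e (Pi.single j (bV i)) := by
      simp [b, Pi.basis_apply]
    have happ : CartQ V m τ (b ⟨j, i⟩) = e (Pi.single (τ j) (bV i)) := by
      rw [hb]
      ext l
      show (Pi.single j (bV i) : ∀ _ : Fin m, V) (τ⁻¹ l)
        = (Pi.single (τ j) (bV i) : ∀ _ : Fin m, V) l
      by_cases h : l = τ j
      · subst h
        rw [show τ⁻¹ (τ j) = j from τ.symm_apply_apply j]
        simp
      · rw [Pi.single_eq_of_ne h, Pi.single_eq_of_ne]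
        intro hc
        exact h (by rw [← hc]; simp)
    rw [happ]
    have : b.repr (e (Pi.single (τ j) (bV i))) =
        (Pi.basis fun _ : Fin m => bV).repr (Pi.single (τ j) (bV i)) := by
      simp [b]
    rw [this, Pi.basis_repr]
    by_cases h : τ j = j
    · rw [if_pos h, h]
      simp
    · rw [if_neg h, Pi.single_eq_of_ne (Ne.symm h)]  -- (Pi.single (τ j) v) j with j ≠ τ j
      simp
  calc (∑ x, Matrix.diag (toMatrix b b (CartQ V m τ)) x)
      = ∑ x : Σ _ : Fin m, Fin (finrank ℂ V), if τ x.1 = x.1 then (1:ℂ) else 0 := by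
        apply Finset.sum_congr rfl; intro x _; exact hdiag x
    _ = ∑ j : Fin m, ∑ _i : Fin (finrank ℂ V), if τ j = j then (1:ℂ) else 0 := by
        rw [← Finset.univ_sigma_univ, Finset.sum_sigma]
    _ = (finrank ℂ V : ℂ) * ((m : ℂ) - (τ.support.card : ℂ)) := by
        have : ∀ j : Fin m, ∑ _i : Fin (finrank ℂ V), (if τ j = j then (1:ℂ) else 0)
            = (finrank ℂ V : ℂ) * (if τ j = j then (1:ℂ) else 0) := by
          intro j; rw [Finset.sum_const, Finset.card_univ, Fintype.card_fin, nsmul_eq_mul]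
        rw [Finset.sum_congr rfl (fun j _ => this j), ← Finset.mul_sum]
        congr 1
        rw [Finset.sum_boole]
        have hsupp : τ.support = Finset.univ.filter (fun i => ¬ τ i = i) := by
          ext x; simp [Equiv.Perm.mem_support]
        have hc := Finset.card_filter_add_card_filter_not
          (s := Finset.univ) (p := fun i : Fin m => τ i = i)
        rw [← hsupp, Finset.card_univ, Fintype.card_fin] at hc
        have := congrArg (Nat.cast : ℕ → ℂ) hc
        push_cast at this
        linear_combination this
end

open Module LinearMap in
lemma finrank_cartSym_eq (V : Type*) [NormedAddCommGroup V] [InnerProductSpace ℂ V]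
    [FiniteDimensional ℂ V] (m : ℕ) (G : Subgroup (Equiv.Perm (Fin m))) (χ : ↥G → ℂ)
    (hχ1 : χ 1 = 1) (hhom : ∀ a b : ↥G, χ (a * b) = χ a * χ b) :
    (finrank ℂ ↥(LinearMap.range (cartSym V m G χ)) : ℂ) =
      (Nat.card ↥G : ℂ)⁻¹ * ∑ τ : ↥G, χ τ *
        ((finrank ℂ V : ℂ) * ((m:ℂ) - (((τ : Equiv.Perm (Fin m)).support.card : ℕ) : ℂ))) := by
  classical
  have hN0 : 0 < Nat.card ↥G := Nat.card_pos
  have hN : (Nat.card ↥G : ℂ) ≠ 0 := Nat.cast_ne_zero.mpr hN0.ne'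
  set S : CartPow V m →ₗ[ℂ] CartPow V m :=
    ∑ τ : ↥G, χ τ • CartQ V m (τ : Equiv.Perm (Fin m)) with hS
  have hCdef : cartSym V m G χ = (Nat.card ↥G : ℂ)⁻¹ • S := by
    rw [cartSym, hχ1, one_div]
  have hSS : S * S = (Nat.card ↥G : ℂ) • S := by
    rw [hS, Finset.sum_mul_sum]
    have step : ∀ τ : ↥G, ∑ ρ : ↥G,
        (χ τ • CartQ V m (τ : Equiv.Perm (Fin m))) * (χ ρ • CartQ V m (ρ : Equiv.Perm (Fin m)))
        = S := by
      intro τ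
      rw [hS]
      refine Fintype.sum_equiv (Equiv.mulLeft τ) _ _ ?_
      intro ρ
      show (χ τ • CartQ V m (τ : Equiv.Perm (Fin m))) *
          (χ ρ • CartQ V m ((ρ : ↥G) : Equiv.Perm (Fin m)))
        = χ (τ * ρ) • CartQ V m ((τ * ρ : ↥G) : Equiv.Perm (Fin m))
      have hq : CartQ V m (τ : Equiv.Perm (Fin m)) *
            CartQ V m ((ρ : ↥G) : Equiv.Perm (Fin m))
          = CartQ V m ((τ * ρ : ↥G) : Equiv.Perm (Fin m)) := by
        rw [Module.End.mul_eq_comp, ← cartQ_mul]; rfl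
      rw [smul_mul_smul_comm, hq, ← hhom]
    rw [Finset.sum_congr rfl (fun τ _ => step τ), Finset.sum_const, Finset.card_univ,
      ← Nat.card_eq_fintype_card, ← Nat.cast_smul_eq_nsmul ℂ]
  have hidem : cartSym V m G χ ∘ₗ cartSym V m G χ = cartSym V m G χ := by
    rw [← Module.End.mul_eq_comp, hCdef, smul_mul_smul_comm, hSS, smul_smul]
    congr 1
    field_simp
  have hproj : IsProj (LinearMap.range (cartSym V m G χ)) (cartSym V m G χ) := by
    constructor
    · intro x; exact mem_range_self _ x
    · rintro x ⟨y, rfl⟩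
      exact LinearMap.ext_iff.mp hidem y
  rw [← hproj.trace]
  rw [hCdef, map_smul, map_sum]
  congr 1
  refine Finset.sum_congr rfl ?_
  intro τ _
  rw [map_smul, trace_cartQ, smul_eq_mul]

/-- for `G = ⟨σ₁⟩⟨σ₂⟩⋯⟨σ_k⟩` (`k ≥ 2`, `σ_ℓ` disjoint cycles of orders
`m_ℓ`) and `λ = λ_{q₁}⋯λ_{q_k}`,
`dim V^λ(G) = (dim V)·[(m − Σ m_ℓ)·[λ,1_G] + Σ_j Π_{ℓ≠j} (1/m_ℓ) Σ_{d∣m_ℓ} c_{m_ℓ/d}(q_ℓ)]`. -/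
theorem finrank_cartSymClass_product_of_cyclic_groups
    (V : Type*) [NormedAddCommGroup V] [InnerProductSpace ℂ V] [FiniteDimensional ℂ V]
    {m k : ℕ} (hk : 2 ≤ k)
    (σ : Fin k → Equiv.Perm (Fin m)) (hcyc : ∀ ℓ, (σ ℓ).IsCycle)
    (hdisj : ∀ ℓ ℓ', ℓ ≠ ℓ' → (σ ℓ).Disjoint (σ ℓ'))
    (mi : Fin k → ℕ) (hmi : ∀ ℓ, orderOf (σ ℓ) = mi ℓ)
    (q : Fin k → ℕ) (hq : ∀ ℓ, q ℓ < mi ℓ)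
    (χ : ↥(⨆ ℓ, Subgroup.zpowers (σ ℓ)) → ℂ)
    (hχ : ∀ (g : ↥(⨆ ℓ, Subgroup.zpowers (σ ℓ))) (j : Fin k → ℕ),
      (g : Equiv.Perm (Fin m)) = (List.ofFn fun ℓ => σ ℓ ^ j ℓ).prod →
      χ g = ∏ ℓ, Complex.exp (2 * Real.pi * Complex.I * q ℓ * j ℓ / mi ℓ)) :
    (Module.finrank ℂ
        (LinearMap.range (cartSym V m (⨆ ℓ, Subgroup.zpowers (σ ℓ)) χ)) : ℂ) =
      (Module.finrank ℂ V : ℂ) *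
        (((m : ℂ) - ∑ ℓ, (mi ℓ : ℂ)) *
            ((Nat.card (⨆ ℓ, Subgroup.zpowers (σ ℓ) : Subgroup (Equiv.Perm (Fin m))) : ℂ)⁻¹ *
              ∑ g : ↥(⨆ ℓ, Subgroup.zpowers (σ ℓ)), χ g) +
          ∑ j : Fin k, ∏ ℓ ∈ Finset.univ.erase j,
            (mi ℓ : ℂ)⁻¹ * ∑ d ∈ (mi ℓ).divisors, ramanujanSum (mi ℓ / d) (q ℓ)) := by
  classical
  have hmpos : ∀ ℓ, 0 < mi ℓ := fun ℓ => (hmi ℓ) ▸ orderOf_pos _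
  have hm1 : ∀ ℓ, 1 < mi ℓ := by
    intro ℓ
    rcases Nat.lt_or_ge 1 (mi ℓ) with h | h
    · exact h
    · exfalso
      have h1 : mi ℓ = 1 := le_antisymm h (hmpos ℓ)
      exact (hcyc ℓ).ne_one (orderOf_eq_one_iff.mp (by rw [hmi ℓ, h1]))
  haveI instNZ : ∀ ℓ, NeZero (mi ℓ) := fun ℓ => ⟨(hmpos ℓ).ne'⟩
  set ϕ : ∀ ℓ : Fin k, Multiplicative (ZMod (mi ℓ)) →* Equiv.Perm (Fin m) :=
    fun ℓ => cycHom (σ ℓ) (mi ℓ) (hmi ℓ) with hϕdef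
  have hϕapp : ∀ ℓ x, ϕ ℓ x = σ ℓ ^ (Multiplicative.toAdd x).val := fun ℓ x => rfl
  have hϕcomm : Pairwise fun ℓ ℓ' => ∀ x y, Commute (ϕ ℓ x) (ϕ ℓ' y) :=
    fun ℓ ℓ' h => fun x y => ((hdisj ℓ ℓ' h).commute).pow_pow _ _
  set Ψ : (∀ ℓ, Multiplicative (ZMod (mi ℓ))) →* Equiv.Perm (Fin m) :=
    MonoidHom.noncommPiCoprod ϕ hϕcomm with hΨdef
  have hΨlist : ∀ f, Ψ f
      = (List.ofFn fun ℓ => σ ℓ ^ (Multiplicative.toAdd (f ℓ)).val).prod := by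
    intro f
    rw [hΨdef, MonoidHom.noncommPiCoprod_apply, noncommProd_univ_fin]
    rfl
  have hϕrange : ∀ ℓ, (ϕ ℓ).range = Subgroup.zpowers (σ ℓ) := by
    intro ℓ
    apply le_antisymm
    · rintro x ⟨y, rfl⟩
      rw [hϕapp]
      exact Subgroup.npow_mem_zpowers _ _
    · rw [Subgroup.zpowers_le]
      refine ⟨Multiplicative.ofAdd 1, ?_⟩
      rw [hϕapp]
      haveI : Fact (1 < mi ℓ) := ⟨hm1 ℓ⟩
      rw [show Multiplicative.toAdd (Multiplicative.ofAdd (1 : ZMod (mi ℓ))) = 1 from rfl,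
        ZMod.val_one, pow_one]
  have hrange : Ψ.range = (⨆ ℓ, Subgroup.zpowers (σ ℓ)) := by
    rw [hΨdef, MonoidHom.noncommPiCoprod_range]
    exact iSup_congr hϕrange
  have hmem : ∀ f, Ψ f ∈ (⨆ ℓ, Subgroup.zpowers (σ ℓ)) := fun f => hrange ▸ ⟨f, rfl⟩
  set Ψ' : (∀ ℓ, Multiplicative (ZMod (mi ℓ))) →* ↥(⨆ ℓ, Subgroup.zpowers (σ ℓ)) := Ψ.codRestrict (⨆ ℓ, Subgroup.zpowers (σ ℓ)) hmem with hΨ'def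
  have hdisjpow : ∀ ℓ ℓ', ℓ ≠ ℓ' → ∀ a b : ℕ, (σ ℓ ^ a).Disjoint (σ ℓ' ^ b) := by
    intro ℓ ℓ' h a b
    rw [Equiv.Perm.disjoint_iff_disjoint_support]
    exact Finset.disjoint_of_subset_left (Equiv.Perm.support_pow_le _ a)
      (Finset.disjoint_of_subset_right (Equiv.Perm.support_pow_le _ b)
        ((hdisj ℓ ℓ' h).disjoint_support))
  have hplist : ∀ f : ∀ ℓ, Multiplicative (ZMod (mi ℓ)),
      (List.ofFn fun ℓ => σ ℓ ^ (Multiplicative.toAdd (f ℓ)).val).Pairwise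
        Equiv.Perm.Disjoint := by
    intro f
    rw [List.pairwise_ofFn]
    intro i j hij
    exact hdisjpow i j (ne_of_lt hij) _ _
  have hinj : Function.Injective Ψ' := by
    refine (injective_iff_map_eq_one Ψ').mpr ?_
    intro f hf
    have hf1 : Ψ f = 1 := congrArg Subtype.val hf
    rw [hΨlist f] at hf1
    funext ℓ
    have h1 : σ ℓ ^ (Multiplicative.toAdd (f ℓ)).val = 1 := by
      refine list_prod_eq_one_mem _ (hplist f) hf1 _ ?_
      rw [List.mem_ofFn]
      exact ⟨ℓ, rfl⟩
    have h2 : mi ℓ ∣ (Multiplicative.toAdd (f ℓ)).val := by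
      have hd := orderOf_dvd_of_pow_eq_one h1
      rwa [hmi ℓ] at hd
    have h3 : (Multiplicative.toAdd (f ℓ)).val = 0 :=
      Nat.eq_zero_of_dvd_of_lt h2 (ZMod.val_lt _)
    exact toAdd_eq_zero.mp ((ZMod.val_eq_zero _).mp h3)
  have hsurj : Function.Surjective Ψ' := by
    rintro ⟨g, hg⟩
    have hg' : g ∈ Ψ.range := hrange.symm ▸ hg
    obtain ⟨f, hf⟩ := hg'
    exact ⟨f, Subtype.ext hf⟩
  set E : (∀ ℓ, Multiplicative (ZMod (mi ℓ))) ≃ ↥(⨆ ℓ, Subgroup.zpowers (σ ℓ)) :=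
    Equiv.ofBijective Ψ' ⟨hinj, hsurj⟩ with hEdef
  have hEapp : ∀ f, ((E f : ↥(⨆ ℓ, Subgroup.zpowers (σ ℓ))) : Equiv.Perm (Fin m)) = Ψ f := fun f => rfl
  have hNG : Nat.card ↥(⨆ ℓ, Subgroup.zpowers (σ ℓ)) = ∏ ℓ, mi ℓ := by
    rw [← Nat.card_congr E, Nat.card_pi]
    exact Finset.prod_congr rfl fun ℓ _ =>
      (Nat.card_congr Multiplicative.toAdd).trans (Nat.card_zmod _)
  have hmine : ∀ ℓ, (mi ℓ : ℂ) ≠ 0 := fun ℓ => Nat.cast_ne_zero.mpr (hmpos ℓ).ne'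
  have hNne : ((Nat.card ↥(⨆ ℓ, Subgroup.zpowers (σ ℓ)) : ℕ) : ℂ) ≠ 0 := by
    rw [hNG]
    push_cast
    exact Finset.prod_ne_zero_iff.mpr fun ℓ _ => hmine ℓ
  have hχE : ∀ f, χ (E f) = ∏ ℓ, Complex.exp (2 * Real.pi * Complex.I * q ℓ *
      ((Multiplicative.toAdd (f ℓ)).val : ℕ) / mi ℓ) := by
    intro f
    exact hχ (E f) (fun ℓ => (Multiplicative.toAdd (f ℓ)).val)
      (by rw [hEapp, hΨlist])
  have hχ1 : χ 1 = 1 := by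
    have h0 : ((1 : ↥(⨆ ℓ, Subgroup.zpowers (σ ℓ))) : Equiv.Perm (Fin m))
        = (List.ofFn fun ℓ => σ ℓ ^ ((fun _ : Fin k => 0) ℓ)).prod := by
      have hlp : (List.ofFn fun _ : Fin k => (1 : Equiv.Perm (Fin m))).prod = 1 := by
        apply List.prod_eq_one
        intro x hx
        rw [List.mem_ofFn] at hx
        obtain ⟨_, h⟩ := hx
        exact h.symm
      simp only [pow_zero]
      rw [hlp]
      rfl
    rw [hχ 1 (fun _ => 0) h0]
    refine Finset.prod_eq_one fun ℓ _ => ?_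
    norm_num
  have hhom : ∀ a b : ↥(⨆ ℓ, Subgroup.zpowers (σ ℓ)), χ (a * b) = χ a * χ b := by
    intro a b
    obtain ⟨f, rfl⟩ := E.surjective a
    obtain ⟨g, rfl⟩ := E.surjective b
    have hmulE : E f * E g = E (f * g) := (map_mul Ψ' f g).symm
    rw [hmulE, hχE, hχE, hχE, ← Finset.prod_mul_distrib]
    refine Finset.prod_congr rfl fun ℓ _ => ?_
    rw [show Multiplicative.toAdd ((f * g) ℓ)
        = Multiplicative.toAdd (f ℓ) + Multiplicative.toAdd (g ℓ) from rfl]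
    rw [ZMod.val_add, exp_nat_mod, ← Complex.exp_add]
    congr 1
    rw [← add_div]
    congr 1
    push_cast
    ring
  have hsuppval : ∀ ℓ (x : Multiplicative (ZMod (mi ℓ))),
      (σ ℓ ^ (Multiplicative.toAdd x).val).support.card
        = if Multiplicative.toAdd x = 0 then 0 else mi ℓ := by
    intro ℓ x
    by_cases hx : Multiplicative.toAdd x = 0
    · rw [if_pos hx, hx, ZMod.val_zero, pow_zero, Equiv.Perm.support_one, Finset.card_empty]
    · rw [if_neg hx]
      have hv0 : (Multiplicative.toAdd x).val ≠ 0 := fun hc => hx ((ZMod.val_eq_zero _).mp hc)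
      have hnd : ¬ orderOf (σ ℓ) ∣ (Multiplicative.toAdd x).val := by
        rw [hmi ℓ]
        intro hdvd
        exact hv0 (Nat.eq_zero_of_dvd_of_lt hdvd (ZMod.val_lt _))
      rw [(hcyc ℓ).support_pow_eq_iff.mpr hnd, ← (hcyc ℓ).orderOf, hmi ℓ]
  have hsupp : ∀ f, (Ψ f).support.card
      = ∑ ℓ, if Multiplicative.toAdd (f ℓ) = 0 then 0 else mi ℓ := by
    intro f
    rw [hΨlist f, support_card_list_prod _ (hplist f), List.map_ofFn, List.sum_ofFn]
    exact Finset.sum_congr rfl fun ℓ _ => hsuppval ℓ (f ℓ)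
  set Sf : Fin k → ℂ := fun ℓ => ∑ x : Multiplicative (ZMod (mi ℓ)),
    Complex.exp (2 * Real.pi * Complex.I * q ℓ *
      ((Multiplicative.toAdd x).val : ℕ) / mi ℓ) with hSfdef
  have hSfram : ∀ ℓ, Sf ℓ = ∑ d ∈ (mi ℓ).divisors, ramanujanSum (mi ℓ / d) (q ℓ) := by
    intro ℓ
    rw [ramanujan_div_sum (mi ℓ) (q ℓ) (hmpos ℓ), hSfdef]
    rw [← sum_zmod_val (mi ℓ)
      (fun t => Complex.exp (2 * Real.pi * Complex.I * q ℓ * t / mi ℓ))]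
    exact Fintype.sum_equiv Multiplicative.toAdd _ _ (fun x => rfl)
  have hterm : ∀ j : Fin k, (∑ f : ∀ ℓ, Multiplicative (ZMod (mi ℓ)),
      (∏ ℓ, Complex.exp (2 * Real.pi * Complex.I * q ℓ *
          ((Multiplicative.toAdd (f ℓ)).val : ℕ) / mi ℓ))
        * (if Multiplicative.toAdd (f j) = 0 then (mi j : ℂ) else 0))
      = (mi j : ℂ) * ∏ ℓ ∈ Finset.univ.erase j, Sf ℓ := by
    intro j
    set F : ∀ ℓ : Fin k, Multiplicative (ZMod (mi ℓ)) → ℂ := fun ℓ x =>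
      if ℓ = j then Complex.exp (2 * Real.pi * Complex.I * q ℓ *
          ((Multiplicative.toAdd x).val : ℕ) / mi ℓ)
          * (if Multiplicative.toAdd x = 0 then (mi j : ℂ) else 0)
        else Complex.exp (2 * Real.pi * Complex.I * q ℓ *
          ((Multiplicative.toAdd x).val : ℕ) / mi ℓ) with hFdef
    have hstep1 : ∀ f : ∀ ℓ, Multiplicative (ZMod (mi ℓ)),
        (∏ ℓ, Complex.exp (2 * Real.pi * Complex.I * q ℓ *
            ((Multiplicative.toAdd (f ℓ)).val : ℕ) / mi ℓ))
          * (if Multiplicative.toAdd (f j) = 0 then (mi j : ℂ) else 0)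
        = ∏ ℓ, F ℓ (f ℓ) := by
      intro f
      rw [← Finset.mul_prod_erase Finset.univ _ (Finset.mem_univ j),
        ← Finset.mul_prod_erase Finset.univ (fun ℓ => F ℓ (f ℓ)) (Finset.mem_univ j)]
      have h1 : F j (f j) = Complex.exp (2 * Real.pi * Complex.I * q j *
          ((Multiplicative.toAdd (f j)).val : ℕ) / mi j)
          * (if Multiplicative.toAdd (f j) = 0 then (mi j : ℂ) else 0) := by
        simp [hFdef]
      have h2 : ∀ ℓ ∈ Finset.univ.erase j, F ℓ (f ℓ)
          = Complex.exp (2 * Real.pi * Complex.I * q ℓ *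
            ((Multiplicative.toAdd (f ℓ)).val : ℕ) / mi ℓ) := by
        intro ℓ hℓ
        simp [hFdef, (Finset.mem_erase.mp hℓ).1]
      rw [h1, Finset.prod_congr rfl h2]
      ring
    rw [Finset.sum_congr rfl fun f _ => hstep1 f]
    have hstep2 : (∑ f : ∀ ℓ, Multiplicative (ZMod (mi ℓ)), ∏ ℓ, F ℓ (f ℓ))
        = ∏ ℓ, ∑ x : Multiplicative (ZMod (mi ℓ)), F ℓ x := by
      rw [Finset.prod_univ_sum (fun _ => Finset.univ) F, Fintype.piFinset_univ]
    rw [hstep2, ← Finset.mul_prod_erase Finset.univ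
      (fun ℓ => ∑ x : Multiplicative (ZMod (mi ℓ)), F ℓ x) (Finset.mem_univ j)]
    have h3 : (∑ x : Multiplicative (ZMod (mi j)), F j x) = (mi j : ℂ) := by
      have h4 : ∀ x : Multiplicative (ZMod (mi j)), F j x
          = if x = 1 then (mi j : ℂ) else 0 := by
        intro x
        by_cases hx : x = 1
        · subst hx
          simp [hFdef, toAdd_one, ZMod.val_zero]
        · have hne : Multiplicative.toAdd x ≠ 0 := fun hc => hx (toAdd_eq_zero.mp hc)
          simp [hFdef, hx, hne]
      rw [Finset.sum_congr rfl fun x _ => h4 x, Finset.sum_ite_eq' Finset.univ (1 :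
        Multiplicative (ZMod (mi j))) (fun _ => (mi j : ℂ)), if_pos (Finset.mem_univ _)]
    rw [h3]
    congr 1
    refine Finset.prod_congr rfl fun ℓ hℓ => ?_
    simp only [hFdef, if_neg (Finset.mem_erase.mp hℓ).1]
    rfl
  -- main computation
  rw [finrank_cartSym_eq V m (⨆ ℓ, Subgroup.zpowers (σ ℓ)) χ hχ1 hhom]
  have htrans : (∑ τ : ↥(⨆ ℓ, Subgroup.zpowers (σ ℓ)), χ τ * ((Module.finrank ℂ V : ℂ)
        * ((m : ℂ) - (((τ : Equiv.Perm (Fin m)).support.card : ℕ) : ℂ))))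
      = ∑ f : ∀ ℓ, Multiplicative (ZMod (mi ℓ)),
        (∏ ℓ, Complex.exp (2 * Real.pi * Complex.I * q ℓ *
          ((Multiplicative.toAdd (f ℓ)).val : ℕ) / mi ℓ))
        * ((Module.finrank ℂ V : ℂ)
          * ((m : ℂ) - ∑ ℓ, (if Multiplicative.toAdd (f ℓ) = 0 then (0:ℂ) else (mi ℓ : ℂ)))) := by
    rw [← Equiv.sum_comp E]
    refine Finset.sum_congr rfl fun f _ => ?_
    rw [hχE f]
    congr 3
    rw [hEapp, hsupp f]
    push_cast
    refine Finset.sum_congr rfl fun ℓ _ => ?_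
    by_cases hc : Multiplicative.toAdd (f ℓ) = 0
    · simp [hc]
    · simp [hc]
  rw [htrans]
  have hsplit : ∀ f : ∀ ℓ, Multiplicative (ZMod (mi ℓ)),
      ((m : ℂ) - ∑ ℓ, (if Multiplicative.toAdd (f ℓ) = 0 then (0:ℂ) else (mi ℓ : ℂ)))
      = ((m : ℂ) - ∑ ℓ, (mi ℓ : ℂ))
        + ∑ ℓ, (if Multiplicative.toAdd (f ℓ) = 0 then (mi ℓ : ℂ) else 0) := by
    intro f
    have hsum : (∑ ℓ, (mi ℓ : ℂ))
        = (∑ ℓ, (if Multiplicative.toAdd (f ℓ) = 0 then (0:ℂ) else (mi ℓ : ℂ)))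
          + ∑ ℓ, (if Multiplicative.toAdd (f ℓ) = 0 then (mi ℓ : ℂ) else 0) := by
      rw [← Finset.sum_add_distrib]
      refine Finset.sum_congr rfl fun ℓ _ => ?_
      by_cases hc : Multiplicative.toAdd (f ℓ) = 0 <;> simp [hc]
    linear_combination hsum
  have hcf : (∑ f : ∀ ℓ, Multiplicative (ZMod (mi ℓ)),
      ∏ ℓ, Complex.exp (2 * Real.pi * Complex.I * q ℓ *
        ((Multiplicative.toAdd (f ℓ)).val : ℕ) / mi ℓ)) = ∑ g : ↥(⨆ ℓ, Subgroup.zpowers (σ ℓ)), χ g := by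
    rw [← Equiv.sum_comp E]
    exact Finset.sum_congr rfl fun f _ => (hχE f).symm
  have hbig : (∑ f : ∀ ℓ, Multiplicative (ZMod (mi ℓ)),
      (∏ ℓ, Complex.exp (2 * Real.pi * Complex.I * q ℓ *
        ((Multiplicative.toAdd (f ℓ)).val : ℕ) / mi ℓ))
      * ((Module.finrank ℂ V : ℂ)
        * ((m : ℂ) - ∑ ℓ, (if Multiplicative.toAdd (f ℓ) = 0 then (0:ℂ) else (mi ℓ : ℂ)))))
      = (Module.finrank ℂ V : ℂ) * (((m : ℂ) - ∑ ℓ, (mi ℓ : ℂ)) * (∑ g : ↥(⨆ ℓ, Subgroup.zpowers (σ ℓ)), χ g)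
        + ∑ j : Fin k, (mi j : ℂ) * ∏ ℓ ∈ Finset.univ.erase j, Sf ℓ) := by
    have hper : ∀ f : ∀ ℓ, Multiplicative (ZMod (mi ℓ)),
        (∏ ℓ, Complex.exp (2 * Real.pi * Complex.I * q ℓ *
          ((Multiplicative.toAdd (f ℓ)).val : ℕ) / mi ℓ))
        * ((Module.finrank ℂ V : ℂ)
          * ((m : ℂ) - ∑ ℓ, (if Multiplicative.toAdd (f ℓ) = 0 then (0:ℂ) else (mi ℓ : ℂ))))
        = (Module.finrank ℂ V : ℂ) * ((((m : ℂ) - ∑ ℓ, (mi ℓ : ℂ))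
            * ∏ ℓ, Complex.exp (2 * Real.pi * Complex.I * q ℓ *
              ((Multiplicative.toAdd (f ℓ)).val : ℕ) / mi ℓ))
          + ∑ j : Fin k, (∏ ℓ, Complex.exp (2 * Real.pi * Complex.I * q ℓ *
              ((Multiplicative.toAdd (f ℓ)).val : ℕ) / mi ℓ))
            * (if Multiplicative.toAdd (f j) = 0 then (mi j : ℂ) else 0)) := by
      intro f
      rw [hsplit f, ← Finset.mul_sum]
      ring
    rw [Finset.sum_congr rfl fun f _ => hper f, ← Finset.mul_sum]
    congr 1
    rw [Finset.sum_add_distrib, ← Finset.mul_sum, hcf]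
    congr 1
    rw [Finset.sum_comm]
    exact Finset.sum_congr rfl fun j _ => hterm j
  rw [hbig]
  have hNj : ∀ j : Fin k, ((Nat.card ↥(⨆ ℓ, Subgroup.zpowers (σ ℓ)) : ℕ) : ℂ)⁻¹ * ((mi j : ℂ)
      * ∏ ℓ ∈ Finset.univ.erase j, Sf ℓ)
      = ∏ ℓ ∈ Finset.univ.erase j, ((mi ℓ : ℂ)⁻¹ * Sf ℓ) := by
    intro j
    have hNfact : ((Nat.card ↥(⨆ ℓ, Subgroup.zpowers (σ ℓ)) : ℕ) : ℂ)
        = (mi j : ℂ) * ∏ ℓ ∈ Finset.univ.erase j, (mi ℓ : ℂ) := by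
      rw [hNG]
      push_cast
      rw [← Finset.mul_prod_erase Finset.univ _ (Finset.mem_univ j)]
    have hPne : (∏ ℓ ∈ Finset.univ.erase j, (mi ℓ : ℂ)) ≠ 0 :=
      Finset.prod_ne_zero_iff.mpr fun ℓ _ => hmine ℓ
    rw [Finset.prod_mul_distrib, Finset.prod_inv_distrib, hNfact, mul_inv]
    calc ((mi j : ℂ))⁻¹ * (∏ ℓ ∈ Finset.univ.erase j, (mi ℓ : ℂ))⁻¹
          * ((mi j : ℂ) * ∏ ℓ ∈ Finset.univ.erase j, Sf ℓ)
        = ((mi j : ℂ) * ((mi j : ℂ))⁻¹) * ((∏ ℓ ∈ Finset.univ.erase j, (mi ℓ : ℂ))⁻¹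
          * ∏ ℓ ∈ Finset.univ.erase j, Sf ℓ) := by ring
      _ = (∏ ℓ ∈ Finset.univ.erase j, (mi ℓ : ℂ))⁻¹ * ∏ ℓ ∈ Finset.univ.erase j, Sf ℓ := by
          rw [mul_inv_cancel₀ (hmine j), one_mul]
  have hramrw : ∀ j : Fin k, (∏ ℓ ∈ Finset.univ.erase j,
      ((mi ℓ : ℂ)⁻¹ * ∑ d ∈ (mi ℓ).divisors, ramanujanSum (mi ℓ / d) (q ℓ)))
      = ∏ ℓ ∈ Finset.univ.erase j, ((mi ℓ : ℂ)⁻¹ * Sf ℓ) := by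
    intro j
    exact Finset.prod_congr rfl fun ℓ _ => by rw [hSfram ℓ]
  rw [Finset.sum_congr rfl fun j _ => hramrw j]
  rw [Finset.sum_congr rfl fun j (_ : j ∈ Finset.univ) => (hNj j).symm]
  rw [← Finset.mul_sum]
  ring
end

section
/- Let G = D_{2m} ≤ S_m (m ≥ 3) be the dihedral group generated by r = (1 2 ⋯ m) and the reflection s fixing 1. For any λ ∈ Irr(G), dim V^λ(G) = (dim V)·(λ(1)/2)·(λ(1) + λ(s)). -/
open scoped Classical InnerProductSpace ComplexConjugate

/-- The dihedral group `D_{2m} ≤ S_m`, generated by the `m`-cycle `r` and the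
reflection `s = (x ↦ -x)` fixing the first point. -/
def dihedralG (m : ℕ) [NeZero m] : Subgroup (Equiv.Perm (Fin m)) :=
  Subgroup.closure {finRotate m, (Equiv.neg (Fin m) : Equiv.Perm (Fin m))}

/-- The reflection `s` as an element of `D_{2m}`. -/
def sElt (m : ℕ) [NeZero m] : ↥(dihedralG m) :=
  ⟨(Equiv.neg (Fin m) : Equiv.Perm (Fin m)), Subgroup.subset_closure (by simp)⟩


/- ===== Auxiliary development ===== -/

noncomputable section

open CategoryTheory

namespace CartSymDihedralAux

/-! ### Dihedral group structure -/

variable {m : ℕ} [NeZero m]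

def dperm (m : ℕ) [NeZero m] (k : Fin m) (ε : Bool) : Equiv.Perm (Fin m) :=
  (if ε then (Equiv.neg (Fin m) : Equiv.Perm (Fin m)) else Equiv.refl (Fin m)).trans
    (Equiv.addLeft k)

@[simp] lemma dperm_apply (k : Fin m) (ε : Bool) (x : Fin m) :
    dperm m k ε x = k + (if ε then -x else x) := by
  cases ε <;> simp [dperm]

lemma dperm_mul (k k' : Fin m) (ε ε' : Bool) :
    dperm m k ε * dperm m k' ε' = dperm m (k + if ε then -k' else k') (xor ε ε') := by
  ext x
  cases ε <;> cases ε' <;>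
    simp [Equiv.Perm.mul_apply, dperm_apply] <;> abel

lemma dperm_one : dperm m 0 false = 1 := by
  ext x; simp

lemma dperm_inv (k : Fin m) (ε : Bool) :
    (dperm m k ε)⁻¹ = dperm m (if ε then k else -k) ε := by
  refine inv_eq_of_mul_eq_one_right ?_
  cases ε <;> rw [dperm_mul] <;> simp [dperm_one]

lemma neg_eq_dperm : (Equiv.neg (Fin m) : Equiv.Perm (Fin m)) = dperm m 0 true := by
  ext x; simp

lemma finRotate_eq_dperm : finRotate m = dperm m 1 false := by
  rcases Nat.exists_eq_succ_of_ne_zero (NeZero.ne m) with ⟨m', rfl⟩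
  ext x
  simp [finRotate_succ_apply, add_comm]

open Fin.NatCast in
lemma dperm_mem (k : Fin m) (ε : Bool) : dperm m k ε ∈ dihedralG m := by
  have hr : dperm m 1 false ∈ dihedralG m := by
    rw [← finRotate_eq_dperm]
    exact Subgroup.subset_closure (by simp)
  have hs : dperm m 0 true ∈ dihedralG m := by
    rw [← neg_eq_dperm]
    exact Subgroup.subset_closure (by simp)
  have hpow : ∀ j : ℕ, dperm m (j : Fin m) false ∈ dihedralG m := by
    intro j
    induction j with
    | zero => simpa [dperm_one] using (dihedralG m).one_mem
    | succ j ih =>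
        have : dperm m ((j + 1 : ℕ) : Fin m) false
            = dperm m 1 false * dperm m (j : Fin m) false := by
          rw [dperm_mul]
          push_cast
          simp [add_comm]
        rw [this]
        exact mul_mem hr ih
  have hk : dperm m k false ∈ dihedralG m := by
    simpa [Fin.cast_val_eq_self] using hpow k.val
  cases ε
  · exact hk
  · have : dperm m k true = dperm m k false * dperm m 0 true := by
      rw [dperm_mul]; simp
    rw [this]; exact mul_mem hk hs

lemma mem_dihedral {σ : Equiv.Perm (Fin m)} (h : σ ∈ dihedralG m) :
    ∃ k ε, σ = dperm m k ε := by
  induction h using Subgroup.closure_induction with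
  | mem x hx =>
      rcases hx with h | h
      · exact ⟨1, false, by rw [h, finRotate_eq_dperm]⟩
      · exact ⟨0, true, by rw [h, neg_eq_dperm]⟩
  | one => exact ⟨0, false, dperm_one.symm⟩
  | mul x y _ _ hx hy =>
      obtain ⟨k, ε, rfl⟩ := hx
      obtain ⟨k', ε', rfl⟩ := hy
      exact ⟨_, _, dperm_mul k k' ε ε'⟩
  | inv x _ hx =>
      obtain ⟨k, ε, rfl⟩ := hx
      exact ⟨_, _, dperm_inv k ε⟩

lemma two_ne_zero_fin (hm : 3 ≤ m) : (1 : Fin m) + 1 ≠ 0 := by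
  intro h
  have h2 : ((1 : Fin m) + 1).val = 0 := by rw [h]; rfl
  have hv1 : (1 : Fin m).val = 1 := by rw [Fin.val_one', Nat.mod_eq_of_lt (by omega)]
  rw [Fin.val_add, hv1, Nat.mod_eq_of_lt (by omega)] at h2
  omega

lemma dperm_inj (hm : 3 ≤ m) {k k' : Fin m} {ε ε' : Bool}
    (h : dperm m k ε = dperm m k' ε') : k = k' ∧ ε = ε' := by
  have h0 : dperm m k ε 0 = dperm m k' ε' 0 := by rw [h]
  simp at h0
  have hkk : k = k' := by cases ε <;> cases ε' <;> simpa using h0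
  have h1 : dperm m k ε 1 = dperm m k' ε' 1 := by rw [h]
  refine ⟨hkk, ?_⟩
  subst hkk
  simp only [dperm_apply, add_right_inj] at h1
  cases ε <;> cases ε'
  · rfl
  · exfalso
    have h1' : (1 : Fin m) = -1 := by simpa using h1
    exact two_ne_zero_fin hm (eq_neg_iff_add_eq_zero.mp h1')
  · exfalso
    have h1' : (1 : Fin m) = -1 := by simpa using h1.symm
    exact two_ne_zero_fin hm (eq_neg_iff_add_eq_zero.mp h1')
  · rfl

lemma card_dihedral (hm : 3 ≤ m) : Nat.card ↥(dihedralG m) = 2 * m := by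
  have hb : Function.Bijective
      (fun p : Fin m × Bool => (⟨dperm m p.1 p.2, dperm_mem p.1 p.2⟩ : ↥(dihedralG m))) := by
    constructor
    · rintro ⟨k, ε⟩ ⟨k', ε'⟩ h
      have := dperm_inj hm (Subtype.ext_iff.mp h)
      exact Prod.ext this.1 this.2
    · rintro ⟨σ, hσ⟩
      obtain ⟨k, ε, rfl⟩ := mem_dihedral hσ
      exact ⟨(k, ε), rfl⟩
  rw [← Nat.card_eq_of_bijective _ hb]
  simp [Nat.card_eq_fintype_card, mul_comm]

/-! ### Character theory -/

lemma fdRep_char_one_ne_zero {G : Type} [Group G] (W : FDRep ℂ G) [Simple W] :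
    W.character 1 ≠ 0 := by
  rw [FDRep.char_one]
  have : Nontrivial W := by
    by_contra h
    rw [not_nontrivial_iff_subsingleton] at h
    have hid : (𝟙 W : W ⟶ W) = 0 := by
      apply Action.hom_ext
      ext x
      exact @Subsingleton.elim _ h _ _
    exact CategoryTheory.id_nonzero W hid
  exact_mod_cast (Module.finrank_pos (R := ℂ) (M := W)).ne'

lemma charConv {G : GrpCat.{0}} [Fintype G] (W : FDRep ℂ G) [Simple W] (k : G) :
    W.character 1 * ∑ g : G, W.character g⁻¹ * W.character (g * k)
      = (Fintype.card G : ℂ) * W.character k := by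
  letI : Invertible (Fintype.card G : ℂ) :=
    invertibleOfNonzero (by exact_mod_cast Fintype.card_ne_zero)
  set χ := W.character with hχ
  set B : W →ₗ[ℂ] W := ∑ g : G, χ g⁻¹ • ((W.ρ g : W →ₗ[ℂ] W)) with hB
  have hcomm : ∀ h : G, (W.ρ h : W →ₗ[ℂ] W) ∘ₗ B = B ∘ₗ W.ρ h := by
    intro h
    rw [hB]
    ext x
    simp only [LinearMap.comp_apply, LinearMap.sum_apply, LinearMap.smul_apply, map_sum,
      map_smul, LinearMap.coe_sum, Finset.sum_apply]
    rw [← Equiv.sum_comp (Equiv.mulRight h⁻¹ |>.trans (Equiv.mulLeft h))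
      (fun g => χ g⁻¹ • (W.ρ g) ((W.ρ h) x))]
    refine Finset.sum_congr rfl fun g _ => ?_
    simp only [Equiv.trans_apply, Equiv.coe_mulRight, Equiv.coe_mulLeft]
    have h1 : χ (h * (g * h⁻¹))⁻¹ = χ g⁻¹ := by
      rw [mul_inv_rev, mul_inv_rev, inv_inv]
      have := FDRep.char_conj W g⁻¹ h
      rw [hχ]
      rw [← this]
    rw [h1]
    have h2 : (W.ρ (h * (g * h⁻¹))) ((W.ρ h) x) = (W.ρ h) ((W.ρ g) x) := by
      rw [← LinearMap.comp_apply, ← LinearMap.comp_apply, ← Module.End.mul_eq_comp,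
        ← Module.End.mul_eq_comp, ← map_mul, ← map_mul]
      congr 1
      group
    rw [h2]
  let f : W ⟶ W := ⟨FGModuleCat.ofHom B, by
    intro h
    ext x
    exact (LinearMap.congr_fun (hcomm h) x).symm⟩
  obtain ⟨c, hc⟩ := CategoryTheory.endomorphism_simple_eq_smul_id (𝕜 := ℂ) f
  have hBc : B = c • (LinearMap.id : W →ₗ[ℂ] W) := by
    have := congrArg (fun φ => φ.hom.hom.hom) hc
    exact this.symm
  have htrB : LinearMap.trace ℂ W B = (Fintype.card G : ℂ) := by
    rw [hB, map_sum]
    have horth := FDRep.char_orthonormal W W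
    rw [if_pos ⟨Iso.refl W⟩] at horth
    have hsum : ∑ g : G, χ g * χ g⁻¹ = (Fintype.card G : ℂ) := by
      have h2 := congrArg (fun z => (Fintype.card G : ℂ) * z) horth
      simp only [smul_eq_mul, ← mul_assoc, mul_invOf_self, one_mul, mul_one, Nat.card_eq_fintype_card,
        mul_inv_cancel₀ (Nat.cast_ne_zero.mpr (Fintype.card_ne_zero (α := G)) : (Fintype.card G : ℂ) ≠ 0)] at h2
      exact_mod_cast h2
    calc ∑ g : G, LinearMap.trace ℂ W (χ g⁻¹ • (W.ρ g : W →ₗ[ℂ] W))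
        = ∑ g : G, χ g⁻¹ * χ g := by
          refine Finset.sum_congr rfl fun g _ => ?_
          rw [map_smul, smul_eq_mul]
          rfl
      _ = ∑ g : G, χ g * χ g⁻¹ := by
          refine Finset.sum_congr rfl fun g _ => ?_
          ring
      _ = (Fintype.card G : ℂ) := hsum
  have hc1 : c * χ 1 = (Fintype.card G : ℂ) := by
    have : LinearMap.trace ℂ W B = c * χ 1 := by
      rw [hBc, map_smul, smul_eq_mul]
      rw [hχ, FDRep.char_one]
      congr 1
      exact LinearMap.trace_id ℂ W
    rw [← this, htrB]
  have hk : ∑ g : G, χ g⁻¹ * χ (g * k) = c * χ k := by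
    have e1 : LinearMap.trace ℂ W (B * (W.ρ k : W →ₗ[ℂ] W))
        = ∑ g : G, χ g⁻¹ * χ (g * k) := by
      rw [hB, Finset.sum_mul, map_sum]
      refine Finset.sum_congr rfl fun g _ => ?_
      rw [smul_mul_assoc, map_smul, smul_eq_mul, ← map_mul]
      rfl
    have e2 : LinearMap.trace ℂ W (B * (W.ρ k : W →ₗ[ℂ] W)) = c * χ k := by
      rw [hBc, smul_mul_assoc, map_smul, smul_eq_mul, ← Module.End.one_eq_id, one_mul]
      rfl
    rw [← e1, e2]
  rw [hk, ← hc1]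
  ring

/-! ### CartQ and cartSym -/

variable (V : Type*) [NormedAddCommGroup V] [InnerProductSpace ℂ V]

lemma cartQ_mul (σ τ : Equiv.Perm (Fin m)) :
    CartQ V m (σ * τ) = CartQ V m σ * CartQ V m τ := by
  apply LinearMap.ext
  intro u
  ext i
  show u ((σ * τ)⁻¹ i) = u (τ⁻¹ (σ⁻¹ i))
  rw [mul_inv_rev]
  rfl

variable [FiniteDimensional ℂ V]

lemma trace_cartQ (τ : Equiv.Perm (Fin m)) :
    LinearMap.trace ℂ (CartPow V m) (CartQ V m τ)
      = (Module.finrank ℂ V : ℂ)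
        * ((Finset.univ.filter fun j : Fin m => τ j = j).card : ℂ) := by
  set n := Module.finrank ℂ V
  set bV : Module.Basis (Fin n) ℂ V := Module.finBasis ℂ V
  set e : CartPow V m ≃ₗ[ℂ] (∀ _ : Fin m, V) := WithLp.linearEquiv 2 ℂ (∀ _ : Fin m, V)
  set B : Module.Basis ((_ : Fin m) × Fin n) ℂ (CartPow V m) :=
    (Pi.basis fun _ : Fin m => bV).map e.symm with hB
  rw [LinearMap.trace_eq_matrix_trace ℂ B]
  rw [Matrix.trace]
  have hdiag : ∀ ji : (_ : Fin m) × Fin n,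
      (LinearMap.toMatrix B B (CartQ V m τ)).diag ji
        = if τ ji.1 = ji.1 then 1 else 0 := by
    rintro ⟨j, i⟩
    rw [Matrix.diag_apply, LinearMap.toMatrix_apply]
    have hBji : B ⟨j, i⟩ = e.symm (Pi.single j (bV i)) := by
      rw [hB, Module.Basis.map_apply, Pi.basis_apply]
    rw [hBji]
    have happ : CartQ V m τ (e.symm (Pi.single j (bV i)))
        = e.symm (fun l => (Pi.single j (bV i) : ∀ _ : Fin m, V) (τ⁻¹ l)) := rfl
    rw [happ]
    have hrepr : (B.repr (e.symm fun l => (Pi.single j (bV i) : ∀ _ : Fin m, V) (τ⁻¹ l))) ⟨j, i⟩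
        = bV.repr ((Pi.single j (bV i) : ∀ _ : Fin m, V) (τ⁻¹ j)) i := by
      rw [hB, Module.Basis.map_repr]
      rfl
    rw [hrepr]
    by_cases hfix : τ⁻¹ j = j
    · rw [hfix, Pi.single_eq_same, Module.Basis.repr_self,
        if_pos ((Equiv.Perm.inv_eq_iff_eq.mp hfix).symm), Finsupp.single_eq_same]
    · rw [Pi.single_eq_of_ne hfix, map_zero,
        if_neg (fun h => hfix (Equiv.Perm.inv_eq_iff_eq.mpr h.symm))]
      rfl
  calc ∑ ji : (_ : Fin m) × Fin n, (LinearMap.toMatrix B B (CartQ V m τ)).diag ji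
      = ∑ ji : (_ : Fin m) × Fin n, if τ ji.1 = ji.1 then (1 : ℂ) else 0 :=
        Finset.sum_congr rfl fun ji _ => hdiag ji
    _ = ∑ j : Fin m, ∑ _i : Fin n, if τ j = j then (1 : ℂ) else 0 := by
        rw [← Finset.univ_sigma_univ, Finset.sum_sigma]
    _ = ∑ j : Fin m, if τ j = j then (n : ℂ) else 0 := by
        refine Finset.sum_congr rfl fun j _ => ?_
        by_cases h : τ j = j <;> simp [h]
    _ = ∑ j ∈ Finset.univ.filter (fun j : Fin m => τ j = j), (n : ℂ) := by
        rw [Finset.sum_filter]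
    _ = (n : ℂ) * ((Finset.univ.filter fun j : Fin m => τ j = j).card : ℂ) := by
        rw [Finset.sum_const, nsmul_eq_mul, mul_comm]

lemma cartSym_idem (G : Subgroup (Equiv.Perm (Fin m))) (χ : ↥G → ℂ)
    (hχ : IsIrredChar χ) :
    cartSym V m G χ * cartSym V m G χ = cartSym V m G χ := by
  obtain ⟨W, hW, rfl⟩ := hχ
  haveI := hW
  have hone : W.character 1 ≠ 0 := fdRep_char_one_ne_zero W
  have hN0 : ((Nat.card ↥G : ℕ) : ℂ) ≠ 0 := by
    rw [Nat.card_eq_fintype_card]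
    exact_mod_cast (Fintype.card_ne_zero (α := ↥G))
  set N : ℂ := ((Nat.card ↥G : ℕ) : ℂ) with hNdef
  set χ := W.character with hχdef
  set S : CartPow V m →ₗ[ℂ] CartPow V m := ∑ τ : ↥G, χ τ • CartQ V m ↑τ with hS
  have hconv : ∀ g : ↥G, ∑ σ : ↥G, χ σ * χ (σ⁻¹ * g) = N / χ 1 * χ g := by
    intro g
    letI : Fintype ↑(GrpCat.of ↥G) := (inferInstance : Fintype ↥G)
    have h1 : W.character 1 * ∑ σ : ↥G, W.character σ⁻¹ * W.character (σ * g)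
        = (Fintype.card ↥G : ℂ) * W.character g := charConv (G := GrpCat.of ↥G) W g
    have h2 : ∑ σ : ↥G, χ σ * χ (σ⁻¹ * g) = ∑ σ : ↥G, χ σ⁻¹ * χ (σ * g) := by
      refine Fintype.sum_equiv (Equiv.inv ↥G) _ _ fun σ => ?_
      simp [Equiv.inv_apply]
    rw [h2]
    have h3 : ∑ σ : ↥G, χ σ⁻¹ * χ (σ * g) = N * χ g / χ 1 := by
      rw [eq_div_iff hone, mul_comm _ (χ 1), hχdef]
      rw [h1, hNdef, Nat.card_eq_fintype_card]
    rw [h3]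
    ring
  have hSS : S * S = (N / χ 1) • S := by
    rw [hS, Finset.sum_mul_sum]
    have hterm : ∀ σ τ : ↥G, (χ σ • CartQ V m ↑σ) * (χ τ • CartQ V m ↑τ)
        = (χ σ * χ τ) • CartQ V m ↑(σ * τ) := by
      intro σ τ
      rw [smul_mul_smul_comm, ← cartQ_mul]
      rfl
    calc ∑ σ : ↥G, ∑ τ : ↥G, (χ σ • CartQ V m ↑σ) * (χ τ • CartQ V m ↑τ)
        = ∑ σ : ↥G, ∑ x : ↥G, (χ σ * χ (σ⁻¹ * x)) • CartQ V m ↑x := by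
          refine Finset.sum_congr rfl fun σ _ => ?_
          rw [Finset.sum_congr rfl fun τ _ => hterm σ τ]
          refine Fintype.sum_equiv (Equiv.mulLeft σ) _ _ fun τ => ?_
          simp
      _ = ∑ x : ↥G, (∑ σ : ↥G, χ σ * χ (σ⁻¹ * x)) • CartQ V m ↑x := by
          rw [Finset.sum_comm]
          refine Finset.sum_congr rfl fun x _ => ?_
          rw [Finset.sum_smul]
      _ = (N / χ 1) • ∑ x : ↥G, χ x • CartQ V m ↑x := by
          rw [Finset.smul_sum]
          refine Finset.sum_congr rfl fun x _ => ?_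
          rw [hconv x, mul_smul]
  show ((χ 1 / N) • S) * ((χ 1 / N) • S) = (χ 1 / N) • S
  rw [smul_mul_smul_comm, hSS, smul_smul]
  congr 1
  field_simp

end CartSymDihedralAux

end

/-- for the dihedral group `G = D_{2m} ≤ S_m` (`m ≥ 3`) and any
`λ ∈ Irr(G)`, `dim V^λ(G) = (dim V)·(λ(1)/2)·(λ(1) + λ(s))`. -/
theorem finrank_cartSymClass_dihedral
    (V : Type*) [NormedAddCommGroup V] [InnerProductSpace ℂ V] [FiniteDimensional ℂ V]
    (m : ℕ) [NeZero m] (hm : 3 ≤ m)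
    (χ : ↥(dihedralG m) → ℂ) (hχ : IsIrredChar χ) :
    (Module.finrank ℂ (LinearMap.range (cartSym V m (dihedralG m) χ)) : ℂ) =
      (Module.finrank ℂ V : ℂ) * (χ 1 / 2) * (χ 1 + χ (sElt m)) := by
  classical
  open CartSymDihedralAux in
  obtain ⟨W, hW, hchar⟩ := hχ
  haveI := hW
  subst hchar
  set χ := W.character with hχdef
  have hidem := CartSymDihedralAux.cartSym_idem V (dihedralG m) χ ⟨W, hW, rfl⟩
  set P := cartSym V m (dihedralG m) χ with hPdef
  have hproj : LinearMap.IsProj (LinearMap.range P) P := by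
    constructor
    · intro x; exact LinearMap.mem_range_self P x
    · rintro x ⟨y, rfl⟩
      rw [← Module.End.mul_apply, hidem]
  rw [← hproj.trace]
  -- the distinguished reflections
  have hsj_mem : ∀ j : Fin m, CartSymDihedralAux.dperm m (j + j) true ∈ dihedralG m :=
    fun j => CartSymDihedralAux.dperm_mem (j + j) true
  set sj : Fin m → ↥(dihedralG m) := fun j => ⟨CartSymDihedralAux.dperm m (j + j) true, hsj_mem j⟩
    with hsjdef
  -- conjugacy with sElt
  have hconj : ∀ j : Fin m, χ (sj j) = χ (sElt m) := by
    intro j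
    set hj : ↥(dihedralG m) := ⟨CartSymDihedralAux.dperm m j false,
      CartSymDihedralAux.dperm_mem j false⟩ with hjdef
    have hmul : hj * sElt m * hj⁻¹ = sj j := by
      apply Subtype.ext
      have hv : ((hj * sElt m * hj⁻¹ : ↥(dihedralG m)) : Equiv.Perm (Fin m))
          = CartSymDihedralAux.dperm m j false * Equiv.neg (Fin m)
            * (CartSymDihedralAux.dperm m j false)⁻¹ := rfl
      rw [hv, CartSymDihedralAux.neg_eq_dperm, CartSymDihedralAux.dperm_inv,
        CartSymDihedralAux.dperm_mul, CartSymDihedralAux.dperm_mul]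
      show CartSymDihedralAux.dperm m _ _ = CartSymDihedralAux.dperm m (j + j) true
      norm_num
    rw [← hmul, hχdef, FDRep.char_conj]
  -- stabilizer of j is {1, sj j}
  have hstab : ∀ j : Fin m,
      (Finset.univ.filter fun τ : ↥(dihedralG m) => (↑τ : Equiv.Perm (Fin m)) j = j)
        = {1, sj j} := by
    intro j
    ext τ
    simp only [Finset.mem_filter, Finset.mem_univ, true_and, Finset.mem_insert,
      Finset.mem_singleton]
    constructor
    · intro hfixj
      obtain ⟨k, ε, hk⟩ := CartSymDihedralAux.mem_dihedral τ.2
      rw [hk, CartSymDihedralAux.dperm_apply] at hfixj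
      cases ε
      · left
        apply Subtype.ext
        rw [hk]
        simp only [Bool.false_eq_true, if_false] at hfixj
        have hk0 : k = 0 := by
          have := hfixj
          rwa [add_eq_right] at this
        rw [hk0, CartSymDihedralAux.dperm_one]
        rfl
      · right
        apply Subtype.ext
        rw [hk]
        simp only [if_true] at hfixj
        have hkjj : k = j + j := by
          have h' : k + -j + j = j + j := by rw [hfixj]
          rwa [add_assoc, neg_add_cancel, add_zero] at h'
        rw [hkjj]
    · rintro (rfl | rfl)
      · simp
      · show CartSymDihedralAux.dperm m (j + j) true j = j
        rw [CartSymDihedralAux.dperm_apply]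
        simp only [if_true]
        exact add_neg_cancel_right j j
  have hone_ne : ∀ j : Fin m, (1 : ↥(dihedralG m)) ≠ sj j := by
    intro j h
    have h2 : CartSymDihedralAux.dperm m 0 false = CartSymDihedralAux.dperm m (j + j) true := by
      rw [CartSymDihedralAux.dperm_one]
      exact Subtype.ext_iff.mp h
    have := (CartSymDihedralAux.dperm_inj hm h2).2
    simp at this
  -- the fixed-point-weighted character sum
  have hkey : ∑ τ : ↥(dihedralG m), χ τ
        * (((Finset.univ.filter fun j : Fin m =>
              (↑τ : Equiv.Perm (Fin m)) j = j).card : ℕ) : ℂ)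
      = (m : ℂ) * (χ 1 + χ (sElt m)) := by
    have h1 : ∀ τ : ↥(dihedralG m),
        χ τ * (((Finset.univ.filter fun j : Fin m =>
              (↑τ : Equiv.Perm (Fin m)) j = j).card : ℕ) : ℂ)
          = ∑ j : Fin m, if (↑τ : Equiv.Perm (Fin m)) j = j then χ τ else 0 := by
      intro τ
      rw [← Finset.sum_boole, Finset.mul_sum]
      refine Finset.sum_congr rfl fun j _ => ?_
      by_cases h : (↑τ : Equiv.Perm (Fin m)) j = j <;> simp [h]
    rw [Finset.sum_congr rfl fun τ _ => h1 τ, Finset.sum_comm]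
    have h2 : ∀ j : Fin m,
        ∑ τ : ↥(dihedralG m), (if (↑τ : Equiv.Perm (Fin m)) j = j then χ τ else 0)
          = χ 1 + χ (sElt m) := by
      intro j
      rw [← Finset.sum_filter, hstab j, Finset.sum_insert (by simpa using hone_ne j),
        Finset.sum_singleton, hconj j]
    rw [Finset.sum_congr rfl fun j _ => h2 j, Finset.sum_const, Finset.card_univ,
      Fintype.card_fin, nsmul_eq_mul]
  -- compute the trace
  have hPeq : P = (χ 1 / ((Nat.card ↥(dihedralG m) : ℕ) : ℂ))
      • ∑ τ : ↥(dihedralG m), χ τ • CartQ V m ↑τ := rfl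
  rw [hPeq, map_smul, map_sum, smul_eq_mul]
  have h3 : ∀ τ : ↥(dihedralG m),
      LinearMap.trace ℂ (CartPow V m) (χ τ • CartQ V m ↑τ)
        = (Module.finrank ℂ V : ℂ) * (χ τ
            * (((Finset.univ.filter fun j : Fin m =>
                  (↑τ : Equiv.Perm (Fin m)) j = j).card : ℕ) : ℂ)) := by
    intro τ
    rw [map_smul, smul_eq_mul, CartSymDihedralAux.trace_cartQ]
    ring
  rw [Finset.sum_congr rfl fun τ _ => h3 τ, ← Finset.mul_sum, hkey,
    CartSymDihedralAux.card_dihedral hm]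
  have hm0 : (m : ℂ) ≠ 0 := by
    exact_mod_cast (by omega : m ≠ 0)
  push_cast
  field_simp
end

section
/- Let G = D_{2m} ≤ S_m (m ≥ 3, n = dim V ≥ 2). For each degree-2 irreducible character ψ_h (0 < h < m/2) of D_{2m}, dim V^{ψ_h}(G) = 2n; for the trivial character dim is n; and for the linear character λ_2 with λ_2(r^k)=1, λ_2(sr^k)=−1, the dimension is 0. -/
open scoped Classical InnerProductSpace ComplexConjugate

open scoped Fin.CommRing

noncomputable section Dih

open Equiv Complex

variable {m : ℕ} [NeZero m]

local notation "ng" => (Equiv.neg (Fin m) : Equiv.Perm (Fin m))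

lemma addRight_mul' (a b : Fin m) :
    (Equiv.addRight a : Perm (Fin m)) * Equiv.addRight b = Equiv.addRight (b + a) := by
  ext x; simp [Equiv.Perm.mul_apply, add_assoc]

lemma addRight_zero' : (Equiv.addRight (0 : Fin m) : Perm (Fin m)) = 1 := by
  ext x; simp

lemma prod2 (a b : Fin m) :
    (Equiv.addRight a : Perm (Fin m)) * (ng * Equiv.addRight b) = ng * Equiv.addRight (b - a) := by
  ext x; simp [Equiv.Perm.mul_apply]; ring

lemma prod3 (a b : Fin m) :
    (ng * Equiv.addRight a) * (Equiv.addRight b : Perm (Fin m)) = ng * Equiv.addRight (a + b) := by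
  ext x; simp [Equiv.Perm.mul_apply]; ring

lemma prod4 (a b : Fin m) :
    (ng * Equiv.addRight a) * (ng * Equiv.addRight b) = (Equiv.addRight (b - a) : Perm (Fin m)) := by
  ext x; simp [Equiv.Perm.mul_apply]; ring

lemma addRight_inv' (a : Fin m) :
    (Equiv.addRight a : Perm (Fin m))⁻¹ = Equiv.addRight (-a) := by
  apply inv_eq_of_mul_eq_one_right
  rw [addRight_mul', neg_add_cancel, addRight_zero']

lemma refl_inv' (a : Fin m) :
    ((ng * Equiv.addRight a : Perm (Fin m)))⁻¹ = ng * Equiv.addRight a := by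
  apply inv_eq_of_mul_eq_one_right
  rw [prod4, sub_self, addRight_zero']

lemma finRotate_eq : finRotate m = (Equiv.addRight (1 : Fin m) : Perm (Fin m)) := by
  obtain ⟨m', rfl⟩ := Nat.exists_eq_succ_of_ne_zero (NeZero.ne m)
  ext x
  simp [finRotate_succ_apply]

lemma rot_pow (k : ℕ) : (finRotate m) ^ k = (Equiv.addRight (k : Fin m) : Perm (Fin m)) := by
  induction k with
  | zero => simp [addRight_zero']
  | succ k ih =>
      rw [pow_succ, ih, finRotate_eq, addRight_mul']
      congr 1
      push_cast
      ring

lemma addRight_eq_rot_pow (a : Fin m) :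
    (Equiv.addRight a : Perm (Fin m)) = (finRotate m) ^ (a.val) := by
  rw [rot_pow, Fin.cast_val_eq_self]

lemma memA (a : Fin m) : (Equiv.addRight a : Perm (Fin m)) ∈ dihedralG m := by
  rw [addRight_eq_rot_pow]
  exact pow_mem (Subgroup.subset_closure (by simp)) _

lemma memB (a : Fin m) : (ng * Equiv.addRight a : Perm (Fin m)) ∈ dihedralG m :=
  mul_mem (Subgroup.subset_closure (by simp)) (memA a)

lemma mem_dihedral {g : Perm (Fin m)} (hg : g ∈ dihedralG m) :
    (∃ a, g = Equiv.addRight a) ∨ (∃ a, g = ng * Equiv.addRight a) := by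
  induction hg using Subgroup.closure_induction with
  | mem x hx =>
      rcases hx with hx | hx
      · exact Or.inl ⟨1, by rw [hx, finRotate_eq]⟩
      · refine Or.inr ⟨0, by rw [hx, addRight_zero', mul_one]⟩
  | one => exact Or.inl ⟨0, by rw [addRight_zero']⟩
  | mul x y hx hy ihx ihy =>
      rcases ihx with ⟨a, rfl⟩ | ⟨a, rfl⟩ <;> rcases ihy with ⟨b, rfl⟩ | ⟨b, rfl⟩
      · exact Or.inl ⟨b + a, addRight_mul' a b⟩
      · exact Or.inr ⟨b - a, prod2 a b⟩
      · exact Or.inr ⟨a + b, prod3 a b⟩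
      · exact Or.inl ⟨b - a, prod4 a b⟩
  | inv x hx ihx =>
      rcases ihx with ⟨a, rfl⟩ | ⟨a, rfl⟩
      · exact Or.inl ⟨-a, addRight_inv' a⟩
      · exact Or.inr ⟨a, refl_inv' a⟩

/-- parametrization map -/
def dihφ (m : ℕ) [NeZero m] : Fin m ⊕ Fin m → Perm (Fin m) :=
  Sum.elim (fun a => Equiv.addRight a) (fun a => (Equiv.neg (Fin m) : Perm (Fin m)) * Equiv.addRight a)

lemma two_ne_zero_fin (hm : 3 ≤ m) : (2 : Fin m) ≠ 0 := by
  intro h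
  have h2 : ((2 : ℕ) : Fin m) = 0 := by exact_mod_cast h
  have := congrArg Fin.val h2
  rw [Fin.val_cast_of_lt (by omega)] at this
  simp at this

lemma addRight_ne_refl (hm : 3 ≤ m) (a b : Fin m) :
    (Equiv.addRight a : Perm (Fin m)) ≠ ng * Equiv.addRight b := by
  intro h
  have h0 := DFunLike.congr_fun h (0 : Fin m)
  have h1 := DFunLike.congr_fun h (1 : Fin m)
  simp [Equiv.Perm.mul_apply] at h0 h1
  apply two_ne_zero_fin hm
  linear_combination h1 - h0

lemma dihφ_inj (hm : 3 ≤ m) : Function.Injective (dihφ m) := by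
  intro x y hxy
  have app0 := congrFun (congrArg (fun e : Perm (Fin m) => (e : Fin m → Fin m)) hxy) 0
  rcases x with a | a <;> rcases y with b | b
  · simp [dihφ] at app0 ⊢; exact app0
  · exact absurd hxy (addRight_ne_refl hm a b)
  · exact absurd hxy.symm (addRight_ne_refl hm b a)
  · simp [dihφ, Equiv.Perm.mul_apply] at app0 ⊢
    exact app0

/-- the equivalence -/
def dihEquiv (hm : 3 ≤ m) : (Fin m ⊕ Fin m) ≃ ↥(dihedralG m) :=
  Equiv.ofBijective
    (fun x => ⟨dihφ m x, by rcases x with a | a; exacts [memA a, memB a]⟩)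
    ⟨fun x y hxy => dihφ_inj hm (by simpa [Subtype.ext_iff] using hxy),
     fun g => by
        rcases mem_dihedral g.2 with ⟨a, ha⟩ | ⟨a, ha⟩
        · exact ⟨Sum.inl a, by simp [dihφ, ← ha]⟩
        · exact ⟨Sum.inr a, by simp [dihφ, ← ha]⟩⟩

lemma card_dih (hm : 3 ≤ m) : Nat.card ↥(dihedralG m) = 2 * m := by
  rw [← Nat.card_congr (dihEquiv hm), Nat.card_sum, Nat.card_eq_fintype_card, Fintype.card_fin]
  ring

lemma dih_sum {M : Type*} [AddCommMonoid M] (hm : 3 ≤ m) (F : ↥(dihedralG m) → M) :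
    ∑ τ : ↥(dihedralG m), F τ
      = ∑ a : Fin m, F ⟨Equiv.addRight a, memA a⟩
        + ∑ a : Fin m, F ⟨ng * Equiv.addRight a, memB a⟩ := by
  rw [← Equiv.sum_comp (dihEquiv hm) F, Fintype.sum_sum_type]
  rfl

variable (V : Type*) [NormedAddCommGroup V] [InnerProductSpace ℂ V]

lemma cartSym_apply (hm : 3 ≤ m) (χ : ↥(dihedralG m) → ℂ) (u : CartPow V m) (i : Fin m) :
    cartSym V m (dihedralG m) χ u i
      = (χ 1 / (2 * m : ℂ)) •
          (∑ a : Fin m, χ ⟨Equiv.addRight a, memA a⟩ • u (i - a)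
            + ∑ a : Fin m, χ ⟨ng * Equiv.addRight a, memB a⟩ • u (-i - a)) := by
  rw [cartSym, card_dih hm]
  push_cast
  rw [LinearMap.smul_apply, PiLp.smul_apply, LinearMap.sum_apply]
  have hpt : ((∑ τ : ↥(dihedralG m), (χ τ • CartQ V m (τ : Perm (Fin m))) u) i)
      = ∑ τ : ↥(dihedralG m), χ τ • u (((τ : Perm (Fin m)))⁻¹ i) := by
    rw [show ((∑ τ : ↥(dihedralG m), (χ τ • CartQ V m (τ : Perm (Fin m))) u) i)
        = ∑ τ : ↥(dihedralG m), ((χ τ • CartQ V m (τ : Perm (Fin m))) u) i from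
      (by rw [WithLp.ofLp_sum, Finset.sum_apply])]
    rfl
  rw [hpt, dih_sum hm (fun τ => χ τ • u (((τ : Perm (Fin m)))⁻¹ i))]
  congr 1
  congr 1
  · apply Finset.sum_congr rfl
    intro a _
    congr 1
    exact congrArg u (show (Equiv.addRight a : Perm (Fin m))⁻¹ i = i - a by
      rw [addRight_inv']; simp [sub_eq_add_neg])
  · apply Finset.sum_congr rfl
    intro a _
    congr 1
    exact congrArg u (show ((ng * Equiv.addRight a : Perm (Fin m)))⁻¹ i = -i - a by
      rw [refl_inv']; simp [Equiv.Perm.mul_apply]; ring)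


end Dih

set_option linter.unusedSectionVars false
section Roots
variable {m : ℕ} [NeZero m]

lemma pow_mod' (x : ℂ) (hxm : x ^ m = 1) (k : ℕ) : x ^ k = x ^ (k % m) := by
  conv_lhs => rw [← Nat.mod_add_div k m]
  rw [pow_add, pow_mul, hxm, one_pow, mul_one]

lemma pow_val_sub (x : ℂ) (hx0 : x ≠ 0) (hxm : x ^ m = 1) (a b : Fin m) :
    x ^ ((a - b).val) = x ^ (a.val) * (x⁻¹) ^ (b.val) := by
  have h1 : (a - b) + b = a := sub_add_cancel a b
  have hval : ((a - b).val + b.val) % m = a.val := by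
    have := congrArg Fin.val h1
    rwa [Fin.add_def] at this
  have key : x ^ ((a - b).val) * x ^ (b.val) = x ^ (a.val) := by
    rw [← pow_add, pow_mod' x hxm, hval]
  have hb : x ^ (b.val) ≠ 0 := pow_ne_zero _ hx0
  rw [inv_pow]
  field_simp
  linear_combination key

lemma sum_pow_val_eq_zero (x : ℂ) (hx1 : x ≠ 1) (hxm : x ^ m = 1) :
    ∑ a : Fin m, x ^ (a.val) = 0 := by
  rw [Fin.sum_univ_eq_sum_range (fun k => x ^ k) m, geom_sum_eq hx1, hxm, sub_self, zero_div]

lemma zeta_pow_m (h : ℕ) :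
    (Complex.exp (2 * (Real.pi:ℂ) * Complex.I * h / m)) ^ m = 1 := by
  rw [← Complex.exp_nat_mul, Complex.exp_eq_one_iff]
  refine ⟨h, ?_⟩
  have hm : (m : ℂ) ≠ 0 := Nat.cast_ne_zero.2 (NeZero.ne m)
  field_simp
  norm_cast

lemma twoPiI_ne_zero : (2 * (Real.pi : ℂ) * Complex.I) ≠ 0 := by
  have hπ : (Real.pi : ℂ) ≠ 0 := by exact_mod_cast Real.pi_ne_zero
  simp [hπ, Complex.I_ne_zero]

lemma zeta_sq_ne_one (h : ℕ) (h0 : 0 < h) (h2 : 2 * h < m) :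
    (Complex.exp (2 * (Real.pi:ℂ) * Complex.I * h / m)) ^ 2 ≠ 1 := by
  intro hc
  rw [← Complex.exp_nat_mul, Complex.exp_eq_one_iff] at hc
  obtain ⟨n, hn⟩ := hc
  have hm : (m : ℂ) ≠ 0 := Nat.cast_ne_zero.2 (NeZero.ne m)
  have e2 : ((2 * h : ℕ) : ℂ) * (2 * (Real.pi : ℂ) * Complex.I)
      = ((n * m : ℤ) : ℂ) * (2 * (Real.pi : ℂ) * Complex.I) := by
    field_simp at hn
    push_cast
    push_cast at hn
    linear_combination (2 * (Real.pi : ℂ) * Complex.I) * hn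
  have e3 : ((2 * h : ℕ) : ℂ) = ((n * m : ℤ) : ℂ) := mul_right_cancel₀ twoPiI_ne_zero e2
  have e4 : (2 * h : ℤ) = n * m := by exact_mod_cast e3
  have hm' : (0 : ℤ) < m := by exact_mod_cast Nat.pos_of_ne_zero (NeZero.ne m)
  rcases le_or_gt n 0 with hn0 | hn1
  · have : n * m ≤ 0 := mul_nonpos_of_nonpos_of_nonneg hn0 (le_of_lt hm')
    omega
  · have : (m : ℤ) ≤ n * m := le_mul_of_one_le_left (le_of_lt hm') hn1
    have h2' : (2 * h : ℤ) < m := by exact_mod_cast h2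
    omega

lemma two_cos_eq (h k : ℕ) :
    ((2 * Real.cos (2 * Real.pi * (k:ℝ) * (h:ℝ) / (m:ℝ)) : ℝ) : ℂ)
      = (Complex.exp (2 * (Real.pi:ℂ) * Complex.I * h / m)) ^ k
        + ((Complex.exp (2 * (Real.pi:ℂ) * Complex.I * h / m))⁻¹) ^ k := by
  set θ : ℝ := 2 * Real.pi * (k:ℝ) * (h:ℝ) / (m:ℝ) with hθ
  have h1 : (Complex.exp (2 * (Real.pi:ℂ) * Complex.I * h / m)) ^ k
      = Complex.exp ((θ : ℂ) * Complex.I) := by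
    rw [← Complex.exp_nat_mul]
    congr 1
    rw [hθ]
    push_cast
    ring
  have h2 : ((Complex.exp (2 * (Real.pi:ℂ) * Complex.I * h / m))⁻¹) ^ k
      = Complex.exp (-((θ : ℂ) * Complex.I)) := by
    rw [Complex.exp_neg, ← h1, inv_pow]
  rw [h1, h2]
  rw [Complex.ofReal_mul, Complex.ofReal_cos, Complex.ofReal_ofNat]
  have hcos : Complex.cos (θ : ℂ)
      = (Complex.exp ((θ:ℂ) * Complex.I) + Complex.exp (-(θ:ℂ) * Complex.I)) / 2 := rfl
  rw [hcos]
  ring_nf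


end Roots

section Parts

open Equiv Complex

variable {m : ℕ} [NeZero m]
local notation "ng" => (Equiv.neg (Fin m) : Equiv.Perm (Fin m))
variable (V : Type*) [NormedAddCommGroup V] [InnerProductSpace ℂ V]

/-- constant-tuple embedding -/
noncomputable def Lconst : V →ₗ[ℂ] CartPow V m where
  toFun v := WithLp.toLp 2 (fun _ => v)
  map_add' _ _ := rfl
  map_smul' _ _ := rfl

lemma range_triv (hm : 3 ≤ m) [FiniteDimensional ℂ V] :
    Module.finrank ℂ (LinearMap.range (cartSym V m (dihedralG m) (fun _ => (1:ℂ))))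
      = Module.finrank ℂ V := by
  have hm0 : (m : ℂ) ≠ 0 := Nat.cast_ne_zero.2 (NeZero.ne m)
  have key : ∀ u : CartPow V m, cartSym V m (dihedralG m) (fun _ => (1:ℂ)) u
      = Lconst V ((m:ℂ)⁻¹ • ∑ j : Fin m, u j) := by
    intro u
    ext i
    rw [cartSym_apply V hm]
    have r1 : ∑ a : Fin m, (1:ℂ) • u (i - a) = ∑ j : Fin m, u j := by
      rw [← Equiv.sum_comp (Equiv.subLeft i) u]
      exact Finset.sum_congr rfl fun a _ => by simp
    have r2 : ∑ a : Fin m, (1:ℂ) • u (-i - a) = ∑ j : Fin m, u j := by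
      rw [← Equiv.sum_comp (Equiv.subLeft (-i)) u]
      exact Finset.sum_congr rfl fun a _ => by simp [sub_eq_add_neg]
    rw [r1, r2]
    show ((1:ℂ) / (2 * (m:ℂ))) • ((∑ j : Fin m, u j) + (∑ j : Fin m, u j))
        = (m:ℂ)⁻¹ • ∑ j : Fin m, u j
    rw [← two_smul ℂ (∑ j : Fin m, u j), smul_smul]
    congr 1
    field_simp
  have hrange : LinearMap.range (cartSym V m (dihedralG m) (fun _ => (1:ℂ)))
      = LinearMap.range (Lconst V (m := m)) := by
    apply le_antisymm
    · rintro x ⟨u, rfl⟩; exact ⟨_, (key u).symm⟩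
    · rintro x ⟨v, rfl⟩
      refine ⟨(WithLp.toLp 2 (fun j => if j = (0:Fin m) then (m:ℂ) • v else 0) : CartPow V m), ?_⟩
      rw [key]
      have : ((m:ℂ)⁻¹ • ∑ j : Fin m, (if j = (0:Fin m) then (m:ℂ) • v else 0)) = v := by
        rw [Finset.sum_ite_eq' Finset.univ (0:Fin m) (fun _ => (m:ℂ) • v)]
        simp [smul_smul, inv_mul_cancel₀ hm0]
      rw [this]
  rw [hrange]
  exact LinearMap.finrank_range_of_inj (fun v w hvw => congrArg (fun x : CartPow V m => x (0 : Fin m)) hvw)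

lemma range_chi2 (hm : 3 ≤ m) (χ₂ : ↥(dihedralG m) → ℂ)
    (hχ : ∀ (g : ↥(dihedralG m)) (k : ℕ),
      ((g : Equiv.Perm (Fin m)) = (finRotate m) ^ k → χ₂ g = 1) ∧
      ((g : Equiv.Perm (Fin m)) = ng * (finRotate m) ^ k → χ₂ g = -1)) :
    Module.finrank ℂ (LinearMap.range (cartSym V m (dihedralG m) χ₂)) = 0 := by
  have hzero : cartSym V m (dihedralG m) χ₂ = 0 := by
    apply LinearMap.ext
    intro u
    ext i
    rw [cartSym_apply V hm]
    have hA : ∀ a : Fin m, χ₂ ⟨Equiv.addRight a, memA a⟩ = 1 := fun a =>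
      (hχ _ a.val).1 (addRight_eq_rot_pow a)
    have hB : ∀ a : Fin m, χ₂ ⟨ng * Equiv.addRight a, memB a⟩ = -1 := fun a =>
      (hχ _ a.val).2 (congrArg (fun z => ng * z) (addRight_eq_rot_pow a))
    have r1 : ∑ a : Fin m, χ₂ ⟨Equiv.addRight a, memA a⟩ • u (i - a) = ∑ j : Fin m, u j := by
      rw [← Equiv.sum_comp (Equiv.subLeft i) u]
      exact Finset.sum_congr rfl fun a _ => by rw [hA a, one_smul]; simp
    have r2 : ∑ a : Fin m, χ₂ ⟨ng * Equiv.addRight a, memB a⟩ • u (-i - a)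
        = -∑ j : Fin m, u j := by
      rw [← Equiv.sum_comp (Equiv.subLeft (-i)) u, ← Finset.sum_neg_distrib]
      exact Finset.sum_congr rfl fun a _ => by
        rw [hB a, neg_one_smul]
        simp [sub_eq_add_neg]
    rw [r1, r2, add_neg_cancel, smul_zero]
    rfl
  rw [hzero, LinearMap.range_zero]
  exact finrank_bot ℂ _

/-- the two-line embedding -/
noncomputable def Tmap (ζ : ℂ) : (V × V) →ₗ[ℂ] CartPow V m where
  toFun p := WithLp.toLp 2 (fun i => ζ ^ (i.val) • p.1 + (ζ⁻¹) ^ (i.val) • p.2)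
  map_add' p q := PiLp.ext fun i => by
    show ζ ^ (i.val) • (p.1 + q.1) + (ζ⁻¹) ^ (i.val) • (p.2 + q.2)
        = (ζ ^ (i.val) • p.1 + (ζ⁻¹) ^ (i.val) • p.2)
          + (ζ ^ (i.val) • q.1 + (ζ⁻¹) ^ (i.val) • q.2)
    simp only [smul_add]
    abel
  map_smul' c p := PiLp.ext fun i => by
    show ζ ^ (i.val) • (c • p.1) + (ζ⁻¹) ^ (i.val) • (c • p.2)
        = c • (ζ ^ (i.val) • p.1 + (ζ⁻¹) ^ (i.val) • p.2)
    simp only [smul_smul, smul_add, mul_comm]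

lemma range_psi (hm : 3 ≤ m) [FiniteDimensional ℂ V] (h : ℕ) (h0 : 0 < h) (h2 : 2 * h < m)
    (ψ : ↥(dihedralG m) → ℂ)
    (hψ : ∀ (g : ↥(dihedralG m)) (k : ℕ),
      ((g : Equiv.Perm (Fin m)) = (finRotate m) ^ k →
        ψ g = ((2 * Real.cos (2 * Real.pi * k * h / m) : ℝ) : ℂ)) ∧
      ((g : Equiv.Perm (Fin m)) = ng * (finRotate m) ^ k → ψ g = 0)) :
    Module.finrank ℂ (LinearMap.range (cartSym V m (dihedralG m) ψ))
      = 2 * Module.finrank ℂ V := by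
  set ζ : ℂ := Complex.exp (2 * (Real.pi:ℂ) * Complex.I * h / m) with hζdef
  have hm0 : (m : ℂ) ≠ 0 := Nat.cast_ne_zero.2 (NeZero.ne m)
  have hζ0 : ζ ≠ 0 := Complex.exp_ne_zero _
  have hζm : ζ ^ m = 1 := zeta_pow_m h
  have hζ2 : ζ ^ 2 ≠ 1 := zeta_sq_ne_one h h0 h2
  have hζim : (ζ⁻¹) ^ m = 1 := by rw [inv_pow, hζm, inv_one]
  have hζi2 : ((ζ⁻¹) ^ 2) ≠ 1 := by rw [inv_pow]; simpa [inv_eq_one] using hζ2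
  have hζsq2 : ((ζ ^ 2) : ℂ) ≠ 1 := hζ2
  have hvA : ∀ a : Fin m, ψ ⟨Equiv.addRight a, memA a⟩ = ζ ^ (a.val) + (ζ⁻¹) ^ (a.val) :=
    fun a => by
      rw [(hψ ⟨_, memA a⟩ a.val).1 (addRight_eq_rot_pow a), hζdef]
      exact_mod_cast two_cos_eq (m := m) h a.val
  have hvB : ∀ a : Fin m, ψ ⟨ng * Equiv.addRight a, memB a⟩ = 0 := fun a =>
    (hψ _ a.val).2 (congrArg (fun z => ng * z) (addRight_eq_rot_pow a))
  have hv1 : ψ 1 = 2 := by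
    have h1 := (hψ 1 0).1 (by simp)
    rw [h1]
    norm_num
  have key : ∀ u : CartPow V m, cartSym V m (dihedralG m) ψ u
      = Tmap V ζ ((m:ℂ)⁻¹ • ∑ j : Fin m, (ζ⁻¹) ^ (j.val) • u j,
                  (m:ℂ)⁻¹ • ∑ j : Fin m, ζ ^ (j.val) • u j) := by
    intro u
    ext i
    rw [cartSym_apply V hm, hv1]
    have hB0 : ∑ a : Fin m, ψ ⟨ng * Equiv.addRight a, memB a⟩ • u (-i - a) = 0 := by
      simp [hvB]
    rw [hB0, add_zero]
    have hre : ∑ a : Fin m, ψ ⟨Equiv.addRight a, memA a⟩ • u (i - a)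
        = ∑ j : Fin m, (ζ ^ (i.val) * (ζ⁻¹) ^ (j.val) + (ζ⁻¹) ^ (i.val) * ζ ^ (j.val)) • u j := by
      rw [← Equiv.sum_comp (Equiv.subLeft i)
        (fun j => (ζ ^ (i.val) * (ζ⁻¹) ^ (j.val) + (ζ⁻¹) ^ (i.val) * ζ ^ (j.val)) • u j)]
      apply Finset.sum_congr rfl
      intro a _
      rw [hvA a]
      have e1 : (Equiv.subLeft i) a = i - a := Equiv.subLeft_apply i a
      rw [e1]
      congr 1
      rw [pow_val_sub ζ hζ0 hζm i a, pow_val_sub ζ⁻¹ (inv_ne_zero hζ0) hζim i a, inv_inv]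
      field_simp
      have hii : ζ ^ (i.val) * (1 / ζ) ^ (i.val) = 1 := by
        rw [← mul_pow, mul_one_div_cancel hζ0, one_pow]
      linear_combination (-(ζ ^ (a.val) + (1 / ζ) ^ (a.val))) * hii
    rw [hre]
    show ((2:ℂ) / (2 * (m:ℂ))) •
        (∑ j : Fin m, (ζ ^ (i.val) * (ζ⁻¹) ^ (j.val) + (ζ⁻¹) ^ (i.val) * ζ ^ (j.val)) • u j)
      = ζ ^ (i.val) • ((m:ℂ)⁻¹ • ∑ j : Fin m, (ζ⁻¹) ^ (j.val) • u j)
        + (ζ⁻¹) ^ (i.val) • ((m:ℂ)⁻¹ • ∑ j : Fin m, ζ ^ (j.val) • u j)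
    simp only [add_smul, Finset.sum_add_distrib, smul_add, Finset.smul_sum, smul_smul]
    congr 1
    · apply Finset.sum_congr rfl
      intro j _
      congr 1
      field_simp
    · apply Finset.sum_congr rfl
      intro j _
      congr 1
      field_simp
  have hsurj : ∀ p : V × V, Tmap V ζ p ∈ LinearMap.range (cartSym V m (dihedralG m) ψ) := by
    rintro ⟨v, w⟩
    refine ⟨(WithLp.toLp 2 (fun j => ζ ^ (j.val) • v + (ζ⁻¹) ^ (j.val) • w) : CartPow V m), ?_⟩
    rw [key]
    have hα : ((m:ℂ)⁻¹ • ∑ j : Fin m,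
        (ζ⁻¹) ^ (j.val) • (ζ ^ (j.val) • v + (ζ⁻¹) ^ (j.val) • w)) = v := by
      have hterm : ∀ j : Fin m, (ζ⁻¹) ^ (j.val) • (ζ ^ (j.val) • v + (ζ⁻¹) ^ (j.val) • w)
          = v + (((ζ⁻¹) ^ 2) ^ (j.val)) • w := by
        intro j
        rw [smul_add, smul_smul, smul_smul, ← mul_pow, ← mul_pow, inv_mul_cancel₀ hζ0,
          one_pow, one_smul]
        congr 2
        rw [← pow_two, pow_right_comm]
      simp only [hterm, Finset.sum_add_distrib, ← Finset.sum_smul]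
      rw [sum_pow_val_eq_zero ((ζ⁻¹) ^ 2) hζi2 (by rw [pow_right_comm, hζim, one_pow]),
        zero_smul, add_zero, Finset.sum_const, Finset.card_univ, Fintype.card_fin,
        ← Nat.cast_smul_eq_nsmul ℂ, smul_smul, inv_mul_cancel₀ hm0, one_smul]
    have hβ : ((m:ℂ)⁻¹ • ∑ j : Fin m,
        ζ ^ (j.val) • (ζ ^ (j.val) • v + (ζ⁻¹) ^ (j.val) • w)) = w := by
      have hterm : ∀ j : Fin m, ζ ^ (j.val) • (ζ ^ (j.val) • v + (ζ⁻¹) ^ (j.val) • w)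
          = ((ζ ^ 2) ^ (j.val)) • v + w := by
        intro j
        rw [smul_add, smul_smul, smul_smul, ← mul_pow, ← mul_pow, mul_inv_cancel₀ hζ0,
          one_pow, one_smul]
        congr 2
        rw [← pow_two, pow_right_comm]
      simp only [hterm, Finset.sum_add_distrib, ← Finset.sum_smul]
      rw [sum_pow_val_eq_zero (ζ ^ 2) hζsq2 (by rw [pow_right_comm, hζm, one_pow]),
        zero_smul, zero_add, Finset.sum_const, Finset.card_univ, Fintype.card_fin,
        ← Nat.cast_smul_eq_nsmul ℂ, smul_smul, inv_mul_cancel₀ hm0, one_smul]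
    rw [hα, hβ]
  have hrange : LinearMap.range (cartSym V m (dihedralG m) ψ)
      = LinearMap.range (Tmap V (m := m) ζ) := by
    apply le_antisymm
    · rintro x ⟨u, rfl⟩; exact ⟨_, (key u).symm⟩
    · rintro x ⟨p, rfl⟩; exact hsurj p
  have hval1 : ((1 : Fin m)).val = 1 := by
    rw [← Nat.cast_one, Fin.val_natCast]
    exact Nat.mod_eq_of_lt (by omega)
  have hTinj : Function.Injective (Tmap V (m := m) ζ) := by
    rw [injective_iff_map_eq_zero]
    rintro ⟨v, w⟩ hvw
    have h0 : ζ ^ ((0:Fin m).val) • v + (ζ⁻¹) ^ ((0:Fin m).val) • w = 0 := congrArg (fun x : CartPow V m => x 0) hvw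
    have h1 : ζ ^ ((1:Fin m).val) • v + (ζ⁻¹) ^ ((1:Fin m).val) • w = 0 := congrArg (fun x : CartPow V m => x 1) hvw
    simp only [Fin.val_zero, pow_zero, one_smul] at h0
    rw [hval1, pow_one, pow_one] at h1
    have hw : w = -v := eq_neg_of_add_eq_zero_right h0
    rw [hw, smul_neg] at h1
    have hsub : (ζ - ζ⁻¹) • v = 0 := by
      rw [sub_smul, sub_eq_add_neg]
      exact h1
    have hζsub : ζ - ζ⁻¹ ≠ 0 := by
      intro hc
      apply hζ2
      have hcc : ζ = ζ⁻¹ := sub_eq_zero.mp hc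
      calc ζ ^ 2 = ζ * ζ := sq ζ
      _ = ζ * ζ⁻¹ := by nth_rewrite 2 [hcc]; rfl
      _ = 1 := mul_inv_cancel₀ hζ0
    have hv0 : v = 0 := by
      rcases smul_eq_zero.mp hsub with hc | hc
      · exact absurd hc hζsub
      · exact hc
    have hw0 : w = 0 := by rw [hw, hv0, neg_zero]
    rw [hv0, hw0]
    rfl
  rw [hrange, LinearMap.finrank_range_of_inj hTinj, Module.finrank_prod, two_mul]

end Parts

/-- dimensions of the Cartesian symmetry classes of `D_{2m} ≤ S_m`
(`m ≥ 3`, `n = dim V ≥ 2`): `2n` for each degree-2 character `ψ_h` (`0 < h < m/2`),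
`n` for the trivial character, and `0` for the linear character `λ₂` with
`λ₂(r^k) = 1`, `λ₂(sr^k) = -1`. -/
theorem finrank_cartSymClass_dihedral_characters
    (V : Type*) [NormedAddCommGroup V] [InnerProductSpace ℂ V] [FiniteDimensional ℂ V]
    (m : ℕ) [NeZero m] (hm : 3 ≤ m) (hn : 2 ≤ Module.finrank ℂ V) :
    (∀ (h : ℕ), 0 < h → 2 * h < m → ∀ ψ : ↥(dihedralG m) → ℂ,
      (∀ (g : ↥(dihedralG m)) (k : ℕ),
        ((g : Equiv.Perm (Fin m)) = (finRotate m) ^ k →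
          ψ g = ((2 * Real.cos (2 * Real.pi * k * h / m) : ℝ) : ℂ)) ∧
        ((g : Equiv.Perm (Fin m)) =
            (Equiv.neg (Fin m) : Equiv.Perm (Fin m)) * (finRotate m) ^ k → ψ g = 0)) →
      Module.finrank ℂ (LinearMap.range (cartSym V m (dihedralG m) ψ)) =
        2 * Module.finrank ℂ V) ∧
    (Module.finrank ℂ (LinearMap.range (cartSym V m (dihedralG m) (fun _ => (1 : ℂ)))) =
      Module.finrank ℂ V) ∧
    (∀ χ₂ : ↥(dihedralG m) → ℂ,
      (∀ (g : ↥(dihedralG m)) (k : ℕ),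
        ((g : Equiv.Perm (Fin m)) = (finRotate m) ^ k → χ₂ g = 1) ∧
        ((g : Equiv.Perm (Fin m)) =
            (Equiv.neg (Fin m) : Equiv.Perm (Fin m)) * (finRotate m) ^ k → χ₂ g = -1)) →
      Module.finrank ℂ (LinearMap.range (cartSym V m (dihedralG m) χ₂)) = 0) := by
  refine ⟨fun h h0 h2 ψ hψ => range_psi V hm h h0 h2 ψ hψ, range_triv V hm,
    fun χ₂ hχ => range_chi2 V hm χ₂ hχ⟩
end
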